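/- arXiv:1312.0932 — 7 statements merged into one kernel-verified Lean document; each statement's English description precedes it below -/
import Mathlib

section
/- Let H and Γ be nonnegative random variables on a common probability space (with arbitrary joint distribution), let R_c > 0 and R_s ≥ 0 be the channel and excess source coding rates, and set R_j = R_c + R_s. Define the SSCC outage event O_s = {R_c ≥ (1/2)log₂(1+H)} ∪ {R_c ≤ (1/2)log₂(1 + (2^{2R_j} − 1)/(1+Γ))} and the JDS outage event O_j = {(1/2)log₂(1 + (2^{2R_j} − 1)/(1+Γ)) ≥ (1/2)log₂(1+H)}. Then O_j ⊆ O_s, and consequently E[1_{O_s^c}·(2^{2R_j} + Γ)^{-1} + 1_{O_s}·(1+Γ)^{-1}] ≥ E[1_{O_j^c}·(2^{2R_j} + Γ)^{-1} + 1_{O_j}·(1+Γ)^{-1}]. -/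
open MeasureTheory ProbabilityTheory Set

/-- JDS outperforms SSCC (Lemma 2). With `R_j = R_c + R_s`, the JDS outage
event is contained in the SSCC outage event, and hence the SSCC expected distortion is
at least the JDS expected distortion. -/
theorem jds_outperforms_sscc
    {Ω : Type*} [MeasurableSpace Ω] (μ : Measure Ω) [IsProbabilityMeasure μ]
    (H Γ : Ω → ℝ) (hH : Measurable H) (hΓ : Measurable Γ)
    (hHnonneg : ∀ ω, 0 ≤ H ω) (hΓnonneg : ∀ ω, 0 ≤ Γ ω)
    (Rc Rs Rj : ℝ) (hRc : 0 < Rc) (hRs : 0 ≤ Rs) (hRj : Rj = Rc + Rs)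
    (Os Oj : Set Ω)
    (hOs : Os = {ω | (1 / 2) * Real.logb 2 (1 + H ω) ≤ Rc}
        ∪ {ω | Rc ≤ (1 / 2) * Real.logb 2 (1 + ((2 : ℝ) ^ (2 * Rj) - 1) / (1 + Γ ω))})
    (hOj : Oj = {ω | (1 / 2) * Real.logb 2 (1 + H ω)
        ≤ (1 / 2) * Real.logb 2 (1 + ((2 : ℝ) ^ (2 * Rj) - 1) / (1 + Γ ω))}) :
    Oj ⊆ Os ∧
    (∫ ω, (Osᶜ.indicator (fun ω => ((2 : ℝ) ^ (2 * Rj) + Γ ω)⁻¹) ω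
          + Os.indicator (fun ω => (1 + Γ ω)⁻¹) ω) ∂μ)
      ≥ ∫ ω, (Ojᶜ.indicator (fun ω => ((2 : ℝ) ^ (2 * Rj) + Γ ω)⁻¹) ω
          + Oj.indicator (fun ω => (1 + Γ ω)⁻¹) ω) ∂μ := by
  have hsub : Oj ⊆ Os := by
    intro ω hω
    rw [hOj] at hω
    rw [hOs]
    by_cases hc : Rc ≤ (1 / 2) * Real.logb 2 (1 + ((2 : ℝ) ^ (2 * Rj) - 1) / (1 + Γ ω))
    · exact Or.inr hc
    · push_neg at hc
      simp only [Set.mem_setOf_eq] at hω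
      left
      simp only [Set.mem_setOf_eq]
      linarith
  refine ⟨hsub, ?_⟩
  -- pointwise values
  have hpow : (1 : ℝ) ≤ (2 : ℝ) ^ (2 * Rj) := by
    apply Real.one_le_rpow (by norm_num)
    nlinarith
  have ha : ∀ ω, 0 ≤ ((2 : ℝ) ^ (2 * Rj) + Γ ω)⁻¹ := fun ω => by
    have := hΓnonneg ω; positivity
  have hab : ∀ ω, ((2 : ℝ) ^ (2 * Rj) + Γ ω)⁻¹ ≤ (1 + Γ ω)⁻¹ := fun ω => by
    have h1 : (0:ℝ) < 1 + Γ ω := by have := hΓnonneg ω; linarith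
    apply inv_anti₀ h1
    linarith
  have hb1 : ∀ ω, (1 + Γ ω)⁻¹ ≤ 1 := fun ω => by
    have h1 : (1:ℝ) ≤ 1 + Γ ω := by have := hΓnonneg ω; linarith
    exact inv_le_one_of_one_le₀ h1
  -- measurability of sets
  have mlog : Measurable fun x : ℝ => Real.logb 2 x := by
    unfold Real.logb; exact Real.measurable_log.div_const _
  have hmOs : MeasurableSet Os := by
    rw [hOs]
    apply MeasurableSet.union
    · exact measurableSet_le ((mlog.comp (measurable_const.add hH)).const_mul _)
        measurable_const
    · exact measurableSet_le measurable_const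
        (((mlog.comp (measurable_const.add (measurable_const.div
          (measurable_const.add hΓ))))).const_mul _)
  have hmOj : MeasurableSet Oj := by
    rw [hOj]
    exact measurableSet_le ((mlog.comp (measurable_const.add hH)).const_mul _)
      (((mlog.comp (measurable_const.add (measurable_const.div
        (measurable_const.add hΓ))))).const_mul _)
  -- integrands
  set a : Ω → ℝ := fun ω => ((2 : ℝ) ^ (2 * Rj) + Γ ω)⁻¹ with ha_def
  set b : Ω → ℝ := fun ω => (1 + Γ ω)⁻¹ with hb_def
  have key : ∀ ω, Ojᶜ.indicator a ω + Oj.indicator b ω ≤ Osᶜ.indicator a ω + Os.indicator b ω := by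
    intro ω
    by_cases hj : ω ∈ Oj
    · have hs : ω ∈ Os := hsub hj
      rw [Set.indicator_of_notMem (by simpa using hj), Set.indicator_of_mem hj,
        Set.indicator_of_notMem (by simpa using hs), Set.indicator_of_mem hs]
    · rw [Set.indicator_of_mem (by simpa using hj), Set.indicator_of_notMem hj]
      by_cases hs : ω ∈ Os
      · rw [Set.indicator_of_notMem (by simpa using hs), Set.indicator_of_mem hs]
        simpa using hab ω
      · rw [Set.indicator_of_mem (by simpa using hs), Set.indicator_of_notMem hs]
  have hbound : ∀ (S : Set Ω), MeasurableSet S →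
      Integrable (fun ω => Sᶜ.indicator a ω + S.indicator b ω) μ := by
    intro S hS
    apply Integrable.add
    · refine (integrable_const (1:ℝ)).mono' ?_ ?_
      · exact ((hΓ.const_add _).inv.aestronglyMeasurable).indicator hS.compl
      · filter_upwards with ω
        rw [Real.norm_eq_abs, abs_of_nonneg (Set.indicator_nonneg (fun x _ => ha x) ω)]
        exact le_trans (Set.indicator_le_self' (fun x _ => ha x) ω |>.trans (hab ω))
          (hb1 ω)
    · refine (integrable_const (1:ℝ)).mono' ?_ ?_
      · exact ((hΓ.const_add _).inv.aestronglyMeasurable).indicator hS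
      · filter_upwards with ω
        rw [Real.norm_eq_abs, abs_of_nonneg (Set.indicator_nonneg (fun x _ => by
          have h1 : (0:ℝ) < 1 + Γ x := by have := hΓnonneg x; linarith
          positivity) ω)]
        exact le_trans (Set.indicator_le_self' (fun x _ => by
          have h1 : (0:ℝ) < 1 + Γ x := by have := hΓnonneg x; linarith
          positivity) ω) (hb1 ω)
  exact integral_mono (hbound Oj hmOj) (hbound Os hmOs) key
end

section
/- Let H and Γ be independent nonnegative random variables with E[H] < ∞, E[Γ] = μ < ∞, and Var(Γ) = σ² < ∞. Fix δ ∈ (0, μ] and set γ̄ = μ − δ. Then 0 ≤ E[ 1_{Γ<γ̄}·(1+Γ)^{-1} + 1_{Γ≥γ̄}·((1+H)(1+γ̄) + Γ − γ̄)^{-1} ] − E[ ((1+H)(1+Γ))^{-1} ] ≤ σ²/δ² + 2δ·E[H]. In particular, for a sequence of side-information gains (Γ_L) with variances σ_L² → 0 as L → ∞, choosing δ_L appropriately makes this difference tend to 0. -/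
open MeasureTheory ProbabilityTheory Set

/-- quantitative bound behind Lemma 3. For independent nonnegative `H, Γ`
with `E[H] < ∞`, `E[Γ] = m`, `Var(Γ) = σ²`, `δ ∈ (0, m]`, `γ̄ = m − δ`, the difference
between the single-layer expected distortion targeting `γ̄` and the informed encoder
lower bound is between `0` and `σ²/δ² + 2δ·E[H]`. -/
theorem informed_bound_convergence
    {Ω : Type*} [MeasurableSpace Ω] (μ : Measure Ω) [IsProbabilityMeasure μ]
    (H Γ : Ω → ℝ) (hH : Measurable H) (hΓ : Measurable Γ)
    (hHnonneg : ∀ ω, 0 ≤ H ω) (hΓnonneg : ∀ ω, 0 ≤ Γ ω)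
    (hHint : Integrable H μ) (hΓL2 : MemLp Γ 2 μ)
    (hindep : IndepFun H Γ μ)
    (m σ2 δ γbar : ℝ)
    (hm : ∫ ω, Γ ω ∂μ = m) (hσ2 : variance Γ μ = σ2)
    (hδ : 0 < δ) (hδm : δ ≤ m) (hγbar : γbar = m - δ) :
    0 ≤ (∫ ω, ({ω | Γ ω < γbar}.indicator (fun ω => (1 + Γ ω)⁻¹) ω
            + {ω | γbar ≤ Γ ω}.indicator
                (fun ω => ((1 + H ω) * (1 + γbar) + Γ ω - γbar)⁻¹) ω) ∂μ)
          - ∫ ω, ((1 + H ω) * (1 + Γ ω))⁻¹ ∂μ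
    ∧ (∫ ω, ({ω | Γ ω < γbar}.indicator (fun ω => (1 + Γ ω)⁻¹) ω
            + {ω | γbar ≤ Γ ω}.indicator
                (fun ω => ((1 + H ω) * (1 + γbar) + Γ ω - γbar)⁻¹) ω) ∂μ)
          - (∫ ω, ((1 + H ω) * (1 + Γ ω))⁻¹ ∂μ)
        ≤ σ2 / δ ^ 2 + 2 * δ * ∫ ω, H ω ∂μ := by
  have hγb0 : 0 ≤ γbar := by rw [hγbar]; linarith
  set F : Ω → ℝ := fun ω => {ω | Γ ω < γbar}.indicator (fun ω => (1 + Γ ω)⁻¹) ω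
            + {ω | γbar ≤ Γ ω}.indicator
                (fun ω => ((1 + H ω) * (1 + γbar) + Γ ω - γbar)⁻¹) ω with hFdef
  set G : Ω → ℝ := fun ω => ((1 + H ω) * (1 + Γ ω))⁻¹ with hGdef
  have hs1 : MeasurableSet {ω | Γ ω < γbar} := measurableSet_lt hΓ measurable_const
  have hs2 : MeasurableSet {ω | γbar ≤ Γ ω} := measurableSet_le measurable_const hΓ
  -- basic positivity
  have hB1 : ∀ ω, (1:ℝ) ≤ (1 + H ω) * (1 + Γ ω) := by
    intro ω; nlinarith [hHnonneg ω, hΓnonneg ω]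
  have hA1 : ∀ ω, (1:ℝ) ≤ (1 + H ω) * (1 + γbar) + Γ ω - γbar := by
    intro ω; nlinarith [hHnonneg ω, hΓnonneg ω]
  have hG0 : ∀ ω, 0 ≤ G ω := fun ω => inv_nonneg.2 (by linarith [hB1 ω])
  have hG1 : ∀ ω, G ω ≤ 1 := fun ω => inv_le_one_of_one_le₀ (hB1 ω)
  -- F values by cases
  have hFlt : ∀ ω, Γ ω < γbar → F ω = (1 + Γ ω)⁻¹ := by
    intro ω h
    simp only [hFdef, indicator_of_mem (show ω ∈ {ω | Γ ω < γbar} from h),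
      indicator_of_notMem (show ω ∉ {ω | γbar ≤ Γ ω} from not_le.2 h), add_zero]
  have hFge : ∀ ω, γbar ≤ Γ ω → F ω = ((1 + H ω) * (1 + γbar) + Γ ω - γbar)⁻¹ := by
    intro ω h
    simp only [hFdef, indicator_of_mem (show ω ∈ {ω | γbar ≤ Γ ω} from h),
      indicator_of_notMem (show ω ∉ {ω | Γ ω < γbar} from not_lt.2 h), zero_add]
  have hF0 : ∀ ω, 0 ≤ F ω := by
    intro ω
    rcases lt_or_ge (Γ ω) γbar with h | h
    · rw [hFlt ω h]; exact inv_nonneg.2 (by linarith [hΓnonneg ω])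
    · rw [hFge ω h]; exact inv_nonneg.2 (by linarith [hA1 ω])
  have hF1 : ∀ ω, F ω ≤ 1 := by
    intro ω
    rcases lt_or_ge (Γ ω) γbar with h | h
    · rw [hFlt ω h]; exact inv_le_one_of_one_le₀ (by linarith [hΓnonneg ω])
    · rw [hFge ω h]; exact inv_le_one_of_one_le₀ (hA1 ω)
  have hGleF : ∀ ω, G ω ≤ F ω := by
    intro ω
    rcases lt_or_ge (Γ ω) γbar with h | h
    · rw [hFlt ω h]
      exact inv_anti₀ (by linarith [hΓnonneg ω])
        (by nlinarith [hHnonneg ω, hΓnonneg ω])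
    · rw [hFge ω h]
      exact inv_anti₀ (by linarith [hA1 ω])
        (by nlinarith [hHnonneg ω, hΓnonneg ω])
  -- measurability / integrability
  have hFmeas : Measurable F := by
    apply Measurable.add
    · exact Measurable.indicator (by fun_prop) hs1
    · exact Measurable.indicator (by fun_prop) hs2
  have hGmeas : Measurable G := by fun_prop
  have hFint : Integrable F μ := by
    refine Integrable.mono' (integrable_const (1:ℝ)) hFmeas.aestronglyMeasurable ?_
    filter_upwards with ω
    rw [Real.norm_eq_abs, abs_of_nonneg (hF0 ω)]; exact hF1 ω
  have hGint : Integrable G μ := by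
    refine Integrable.mono' (integrable_const (1:ℝ)) hGmeas.aestronglyMeasurable ?_
    filter_upwards with ω
    rw [Real.norm_eq_abs, abs_of_nonneg (hG0 ω)]; exact hG1 ω
  constructor
  · have := integral_mono hGint hFint hGleF
    linarith
  · -- upper bound
    set S : Set Ω := {ω | δ ≤ |Γ ω - m|} with hSdef
    have hSmeas : MeasurableSet S := measurableSet_le measurable_const ((hΓ.sub measurable_const).abs)
    have hpt : ∀ ω, F ω - G ω ≤ S.indicator (fun _ => (1:ℝ)) ω + 2 * δ * H ω := by
      intro ω
      have h2δH : 0 ≤ 2 * δ * H ω := mul_nonneg (by linarith) (hHnonneg ω)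
      rcases lt_or_ge (Γ ω) γbar with h | h
      · have hmem : ω ∈ S := by
          simp only [hSdef, mem_setOf_eq]
          rw [abs_sub_comm, abs_of_nonneg (by rw [hγbar] at h; linarith)]
          rw [hγbar] at h; linarith
        rw [indicator_of_mem hmem]
        have := hF1 ω; have := hG0 ω; linarith
      · rcases le_or_gt (Γ ω) (m + δ) with h' | h'
        · have hind : 0 ≤ S.indicator (fun _ => (1:ℝ)) ω :=
            indicator_nonneg (fun _ _ => zero_le_one) ω
          rw [hFge ω h]
          set A := (1 + H ω) * (1 + γbar) + Γ ω - γbar with hA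
          set B := (1 + H ω) * (1 + Γ ω) with hB
          have hBA : B - A = H ω * (Γ ω - γbar) := by rw [hA, hB]; ring
          have hAB : A ≤ B := by nlinarith [hHnonneg ω]
          have hApos : (0:ℝ) < A := by linarith [hA1 ω]
          have hBpos : (0:ℝ) < B := by linarith [hB1 ω]
          have heq : A⁻¹ - B⁻¹ = (B - A) / (A * B) := by
            field_simp
          have hABone : (1:ℝ) ≤ A * B := by nlinarith [hA1 ω, hB1 ω]
          have hle : (B - A) / (A * B) ≤ B - A := div_le_self (by linarith) hABone
          have hΓb : Γ ω - γbar ≤ 2 * δ := by rw [hγbar]; linarith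
          have : B - A ≤ 2 * δ * H ω := by
            rw [hBA]; nlinarith [hHnonneg ω]
          have hGω : G ω = B⁻¹ := by rw [hGdef, hB]
          rw [hGω]
          linarith [heq ▸ hle]
        · have hmem : ω ∈ S := by
            simp only [hSdef, mem_setOf_eq]
            rw [abs_of_nonneg (by linarith)]
            linarith
          rw [indicator_of_mem hmem]
          have := hF1 ω; have := hG0 ω; linarith
    have hRint : Integrable (fun ω => S.indicator (fun _ => (1:ℝ)) ω + 2 * δ * H ω) μ := by
      exact Integrable.add ((integrable_const (1:ℝ)).indicator hSmeas) (hHint.const_mul _)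
    have hstep : ∫ ω, (F ω - G ω) ∂μ ≤ ∫ ω, (S.indicator (fun _ => (1:ℝ)) ω + 2 * δ * H ω) ∂μ :=
      integral_mono (hFint.sub hGint) hRint hpt
    rw [integral_sub hFint hGint] at hstep
    have hR : ∫ ω, (S.indicator (fun _ => (1:ℝ)) ω + 2 * δ * H ω) ∂μ
        = (μ S).toReal + 2 * δ * ∫ ω, H ω ∂μ := by
      rw [integral_add ((integrable_const (1:ℝ)).indicator hSmeas) (hHint.const_mul _),
        integral_indicator_const (1:ℝ) hSmeas, integral_const_mul]
      simp [Measure.real]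
    have hcheb : (μ S).toReal ≤ σ2 / δ ^ 2 := by
      have h := meas_ge_le_variance_div_sq (μ := μ) hΓL2 hδ
      rw [hm, hσ2] at h
      have hσnn : 0 ≤ σ2 := hσ2 ▸ variance_nonneg Γ μ
      exact ENNReal.toReal_le_of_le_ofReal (div_nonneg hσnn (by positivity)) h
    linarith [hstep, hR ▸ hstep]
end

section
/- Let L_s > 0. For κ ∈ ℝ define Δ_{p1}(κ) = inf{ (1−β)^+ + L_s·β : β ≥ 0 and 1−β ≤ κ } and Δ_{p2}(κ) = inf{ max(κ,0) + 1 + L_s·β : β ≥ 0 and 1−β > κ }, with the convention that the infimum over an empty set is +∞, and where (x)^+ = max{x,0}. Then sup_{κ∈ℝ} min{Δ_{p1}(κ), Δ_{p2}(κ)} = 1 + (1 − 1/L_s)^+. -/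
/-- the optimization of Appendix C giving the distortion exponent of the
partially informed encoder lower bound:
`sup_{κ∈ℝ} min{Δ_{p1}(κ), Δ_{p2}(κ)} = 1 + (1 − 1/L_s)⁺`, where the infima over empty
sets are `+∞` (taken in `EReal`). -/
theorem partially_informed_exponent_optimization
    (Ls : ℝ) (hLs : 0 < Ls) :
    (⨆ κ : ℝ, min
        (sInf {x : EReal | ∃ β : ℝ, 0 ≤ β ∧ 1 - β ≤ κ ∧
            x = ((max (1 - β) 0 + Ls * β : ℝ) : EReal)})
        (sInf {x : EReal | ∃ β : ℝ, 0 ≤ β ∧ κ < 1 - β ∧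
            x = ((max κ 0 + 1 + Ls * β : ℝ) : EReal)}))
      = ((1 + max (1 - 1 / Ls) 0 : ℝ) : EReal) := by
  have hLs' : (1 : ℝ) / Ls > 0 := by positivity
  apply le_antisymm
  · apply iSup_le
    intro κ
    by_cases hκ : 1 - 1 / Ls ≤ κ
    · refine le_trans (min_le_left _ _) ?_
      refine le_trans (sInf_le ⟨1 / Ls, le_of_lt hLs', by linarith, rfl⟩) ?_
      rw [EReal.coe_le_coe_iff]
      have : Ls * (1 / Ls) = 1 := by field_simp
      rw [this]
      linarith
    · push_neg at hκ
      refine le_trans (min_le_right _ _) ?_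
      refine le_trans (sInf_le ⟨0, le_refl 0, by linarith, rfl⟩) ?_
      rw [EReal.coe_le_coe_iff]
      have h1 : max κ 0 ≤ max (1 - 1 / Ls) 0 := max_le_max hκ.le le_rfl
      linarith
  · refine le_trans ?_ (le_iSup _ (1 - 1 / Ls))
    apply le_min
    · apply le_sInf
      rintro x ⟨β, hβ0, hβ1, rfl⟩
      rw [EReal.coe_le_coe_iff]
      have h1 : 1 ≤ Ls * β := by
        rw [mul_comm]
        exact (div_le_iff₀ hLs).mp (by linarith)
      rcases le_total (1 - β) 0 with h2 | h2 <;>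
        rcases le_total (1 - 1 / Ls) 0 with h3 | h3
      · rw [max_eq_right h2, max_eq_right h3]; linarith
      · rw [max_eq_right h2, max_eq_left h3]
        have hL1 : 1 ≤ Ls := (div_le_one hLs).mp (by linarith)
        have h4 : (1 / Ls) * Ls = 1 := by field_simp
        have h5 : Ls ≤ Ls * β := by nlinarith
        nlinarith [sq_nonneg (Ls - 1)]
      · rw [max_eq_left h2, max_eq_right h3]
        have hL1 : Ls ≤ 1 := (one_le_div hLs).mp (by linarith)
        nlinarith
      · rw [max_eq_left h2, max_eq_left h3]
        have hL1 : 1 ≤ Ls := (div_le_one hLs).mp (by linarith)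
        have h4 : (1 / Ls) * Ls = 1 := by field_simp
        nlinarith [mul_nonneg (by linarith : (0:ℝ) ≤ Ls - 1) (by linarith : (0:ℝ) ≤ Ls * β - 1)]
    · apply le_sInf
      rintro x ⟨β, hβ0, hβ1, rfl⟩
      rw [EReal.coe_le_coe_iff]
      have : 0 ≤ Ls * β := mul_nonneg hLs.le hβ0
      linarith
end

section
/- Let L_s > 0 and let Γ₀ be Gamma-distributed with shape L_s and rate L_s (density L_s^{L_s} x^{L_s−1} e^{−L_s x}/Γ(L_s) on [0,∞), mean 1). For ρ > 1 and γ̂ ≥ 0 define ED_pe(γ̂, ρ) = E[ 1_{ρΓ₀ < γ̂}·(1 + ρΓ₀)^{-1} ] + E[ 1_{ρΓ₀ ≥ γ̂}·((γ̂ + 1)(1 + ρ) + ρΓ₀ − γ̂)^{-1} ]. Then −lim_{ρ→∞} log( inf_{γ̂ ≥ 0} ED_pe(γ̂, ρ) ) / log ρ exists and equals 1 + (1 − 1/L_s)^+, where (x)^+ = max{x,0}. -/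
open MeasureTheory ProbabilityTheory Filter Set
open scoped NNReal ENNReal

namespace PIE

noncomputable def F (ρ γ x : ℝ) : ℝ :=
  if ρ * x < γ then (1 + ρ * x)⁻¹ else ((γ + 1) * (1 + ρ) + ρ * x - γ)⁻¹

variable {Ls : ℝ}

lemma gamma_eq :
    gammaMeasure Ls Ls
      = volume.withDensity (fun x => ((Real.toNNReal (gammaPDFReal Ls Ls x) : ℝ≥0) : ℝ≥0∞)) :=
  rfl

lemma integral_gamma (hLs : 0 < Ls) (g : ℝ → ℝ) :
    ∫ x, g x ∂(gammaMeasure Ls Ls) = ∫ x, gammaPDFReal Ls Ls x * g x := by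
  rw [gamma_eq, integral_withDensity_eq_integral_smul
    ((measurable_gammaPDFReal Ls Ls).real_toNNReal) g]
  refine integral_congr_ae (Filter.Eventually.of_forall fun x => ?_)
  simp [NNReal.smul_def, Real.coe_toNNReal _ (gammaPDFReal_nonneg hLs hLs x)]

lemma ae_pos (hLs : 0 < Ls) : ∀ᵐ x ∂(gammaMeasure Ls Ls), 0 < x := by
  rw [ae_iff]
  have : {x : ℝ | ¬ 0 < x} = Set.Iic 0 := by ext x; simp
  rw [this]
  rw [gammaMeasure, withDensity_apply _ measurableSet_Iic,
    lintegral_Iic_eq_lintegral_Iio_add_Icc _ le_rfl,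
    lintegral_gammaPDF_of_nonpos le_rfl, zero_add]
  have : volume (Set.Icc (0:ℝ) 0) = 0 := by simp
  rw [setLIntegral_measure_zero _ _ this]

lemma integrable_pdf (hLs : 0 < Ls) : Integrable (gammaPDFReal Ls Ls) := by
  refine ⟨(measurable_gammaPDFReal Ls Ls).aestronglyMeasurable, ?_⟩
  rw [hasFiniteIntegral_iff_ofReal
    (Filter.Eventually.of_forall (gammaPDFReal_nonneg hLs hLs))]
  have := lintegral_gammaPDF_eq_one hLs hLs
  simp only [gammaPDF] at this
  rw [this]
  exact ENNReal.one_lt_top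

lemma denom_eq (ρ γ x : ℝ) : (γ + 1) * (1 + ρ) + ρ * x - γ = γ * ρ + (1 + ρ) + ρ * x := by ring

lemma F_nonneg {ρ γ x : ℝ} (hρ : 1 ≤ ρ) (hγ : 0 ≤ γ) (hx : 0 ≤ x) : 0 ≤ F ρ γ x := by
  have hρx : 0 ≤ ρ * x := by positivity
  unfold F; split_ifs
  · positivity
  · rw [denom_eq]; positivity

lemma F_le_one {ρ γ x : ℝ} (hρ : 1 ≤ ρ) (hγ : 0 ≤ γ) (hx : 0 ≤ x) : F ρ γ x ≤ 1 := by
  have hρx : 0 ≤ ρ * x := by positivity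
  unfold F; split_ifs
  · rw [inv_le_one_iff₀]; right; linarith
  · rw [denom_eq, inv_le_one_iff₀]; right; nlinarith

lemma measurable_F (ρ γ : ℝ) : Measurable (F ρ γ) := by
  unfold F
  exact Measurable.ite (measurableSet_lt (measurable_const.mul measurable_id) measurable_const)
    (by fun_prop) (by fun_prop)

lemma integrable_F (hLs : 0 < Ls) {ρ γ : ℝ} (hρ : 1 ≤ ρ) (hγ : 0 ≤ γ) :
    Integrable (F ρ γ) (gammaMeasure Ls Ls) := by
  haveI : IsProbabilityMeasure (gammaMeasure Ls Ls) := isProbabilityMeasure_gammaMeasure hLs hLs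
  refine Integrable.mono' (integrable_const 1)
    (measurable_F ρ γ).aestronglyMeasurable ?_
  filter_upwards [ae_pos hLs] with x hx
  rw [Real.norm_eq_abs, abs_le]
  exact ⟨by linarith [F_nonneg hρ hγ hx.le], F_le_one hρ hγ hx.le⟩

lemma ED_nonneg (hLs : 0 < Ls) {ρ γ : ℝ} (hρ : 1 ≤ ρ) (hγ : 0 ≤ γ) :
    0 ≤ ∫ x, F ρ γ x ∂(gammaMeasure Ls Ls) := by
  refine integral_nonneg_of_ae ?_
  filter_upwards [ae_pos hLs] with x hx
  exact F_nonneg hρ hγ hx.le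

lemma gamma_apply (hLs : 0 < Ls) {s : Set ℝ} (hs : MeasurableSet s) :
    (gammaMeasure Ls Ls s).toReal = ∫ x in s, gammaPDFReal Ls Ls x := by
  rw [gammaMeasure, withDensity_apply _ hs,
    integral_eq_lintegral_of_nonneg_ae
      (Filter.Eventually.of_forall fun x => gammaPDFReal_nonneg hLs hLs x)
      ((measurable_gammaPDFReal Ls Ls).aestronglyMeasurable.restrict)]
  rfl

lemma meas_Icc_pos (hLs : 0 < Ls) {u v : ℝ} (hu : 0 < u) (huv : u < v) :
    0 < (gammaMeasure Ls Ls (Icc u v)).toReal := by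
  haveI : IsProbabilityMeasure (gammaMeasure Ls Ls) := isProbabilityMeasure_gammaMeasure hLs hLs
  refine ENNReal.toReal_pos (fun h0 => ?_) (measure_ne_top _ _)
  rw [gammaMeasure, withDensity_apply _ measurableSet_Icc] at h0
  simp only [gammaPDF] at h0
  rw [lintegral_eq_zero_iff ((measurable_gammaPDFReal Ls Ls).ennreal_ofReal)] at h0
  have h1 : ∀ᵐ (x : ℝ), x ∈ Icc u v → gammaPDF Ls Ls x = 0 :=
    (ae_restrict_iff' measurableSet_Icc).mp h0
  have h2 : ∀ᵐ (x : ℝ), x ∉ Icc u v := by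
    filter_upwards [h1] with x hx
    intro hmem
    have hpos : 0 < gammaPDF Ls Ls x :=
      ENNReal.ofReal_pos.mpr (gammaPDFReal_pos hLs hLs (lt_of_lt_of_le hu hmem.1))
    exact absurd (hx hmem) hpos.ne'
  have h3 := ae_iff.mp h2
  rw [show {x : ℝ | ¬ x ∉ Icc u v} = Icc u v by ext x; simp] at h3
  rw [Real.volume_Icc] at h3
  exact absurd h3 (by simp [ENNReal.ofReal_eq_zero]; linarith)

lemma meas_Icc0 (hLs : 0 < Ls) {s : ℝ} (h0 : 0 < s) (h1 : s ≤ 1) :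
    Ls ^ Ls / Real.Gamma Ls * Real.exp (-Ls) / Ls * s ^ Ls
      ≤ (gammaMeasure Ls Ls (Icc 0 s)).toReal := by
  rw [gamma_apply hLs measurableSet_Icc]
  set C := Ls ^ Ls / Real.Gamma Ls with hC
  have hCpos : 0 < C := div_pos (Real.rpow_pos_of_pos hLs Ls) (Real.Gamma_pos_of_pos hLs)
  have key : ∀ x ∈ Icc (0:ℝ) s, C * Real.exp (-Ls) * x ^ (Ls - 1) ≤ gammaPDFReal Ls Ls x := by
    intro x hx
    rw [gammaPDFReal, if_pos hx.1]
    have hee : Real.exp (-Ls) ≤ Real.exp (-(Ls * x)) :=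
      Real.exp_le_exp.mpr (by nlinarith [hx.2, hx.1])
    have hxp : (0:ℝ) ≤ x ^ (Ls - 1) := Real.rpow_nonneg hx.1 _
    calc C * Real.exp (-Ls) * x ^ (Ls - 1) = C * x ^ (Ls - 1) * Real.exp (-Ls) := by ring
      _ ≤ C * x ^ (Ls - 1) * Real.exp (-(Ls * x)) :=
          mul_le_mul_of_nonneg_left hee (by positivity)
  have hint : IntegrableOn (fun x : ℝ => C * Real.exp (-Ls) * x ^ (Ls - 1)) (Icc 0 s) := by
    rw [integrableOn_Icc_iff_integrableOn_Ioc]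
    have := (intervalIntegral.intervalIntegrable_rpow' (r := Ls - 1) (by linarith)).const_mul
      (C * Real.exp (-Ls)) (a := 0) (b := s)
    rw [intervalIntegrable_iff_integrableOn_Ioc_of_le h0.le] at this
    exact this
  have hint2 : IntegrableOn (gammaPDFReal Ls Ls) (Icc 0 s) := (integrable_pdf hLs).integrableOn
  have hmono := setIntegral_mono_on hint hint2 measurableSet_Icc key
  have hcomp : ∫ x in Icc (0:ℝ) s, C * Real.exp (-Ls) * x ^ (Ls - 1)
      = C * Real.exp (-Ls) * (s ^ Ls / Ls) := by
    rw [integral_Icc_eq_integral_Ioc, ← intervalIntegral.integral_of_le h0.le,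
      intervalIntegral.integral_const_mul, integral_rpow (Or.inl (by linarith))]
    rw [show Ls - 1 + 1 = Ls by ring, Real.zero_rpow hLs.ne']
    ring
  rw [hcomp] at hmono
  calc C * Real.exp (-Ls) / Ls * s ^ Ls = C * Real.exp (-Ls) * (s ^ Ls / Ls) := by ring
    _ ≤ _ := hmono


lemma key_low {ρ D ε K e : ℝ} (hρ1 : 1 ≤ ρ) (hK : 0 < K) (hρK : 1 / K ≤ ρ ^ (ε / 2))
    (he : -(D + ε / 2) ≤ e) : ρ ^ (-(D + ε)) ≤ K * ρ ^ e := by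
  have hρ0 : (0:ℝ) < ρ := lt_of_lt_of_le one_pos hρ1
  have h1 : ρ ^ (-(D + ε)) = ρ ^ (-(ε / 2)) * ρ ^ (-(D + ε / 2)) := by
    rw [← Real.rpow_add hρ0]; ring_nf
  have h2 : ρ ^ (-(ε / 2)) ≤ K := by
    rw [Real.rpow_neg hρ0.le]
    have := one_div_le_one_div_of_le (by positivity : (0:ℝ) < 1 / K) hρK
    rwa [one_div_one_div, one_div] at this
  have h3 : ρ ^ (-(D + ε / 2)) ≤ ρ ^ e := Real.rpow_le_rpow_of_exponent_le hρ1 he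
  rw [h1]
  exact mul_le_mul h2 h3 (Real.rpow_nonneg hρ0.le _) hK.le

lemma key_up {ρ D ε K e : ℝ} (hρ1 : 1 ≤ ρ) (hρK : K ≤ ρ ^ (ε / 2))
    (he : e ≤ -(D - ε / 2)) : K * ρ ^ e ≤ ρ ^ (-(D - ε)) := by
  have hρ0 : (0:ℝ) < ρ := lt_of_lt_of_le one_pos hρ1
  have h1 : ρ ^ (-(D - ε)) = ρ ^ (ε / 2) * ρ ^ (-(D - ε / 2)) := by
    rw [← Real.rpow_add hρ0]; ring_nf
  have h3 : ρ ^ e ≤ ρ ^ (-(D - ε / 2)) := Real.rpow_le_rpow_of_exponent_le hρ1 he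
  rw [h1]
  exact mul_le_mul hρK h3 (Real.rpow_nonneg hρ0.le _) (Real.rpow_nonneg hρ0.le _)

lemma integral_F_ge (hLs : 0 < Ls) {ρ γ : ℝ} (hρ : 1 ≤ ρ) (hγ : 0 ≤ γ) {s : Set ℝ}
    (hs : MeasurableSet s) {c : ℝ} (hc0 : 0 ≤ c) (hc : ∀ x ∈ s, c ≤ F ρ γ x) :
    c * (gammaMeasure Ls Ls s).toReal ≤ ∫ x, F ρ γ x ∂(gammaMeasure Ls Ls) := by
  haveI : IsProbabilityMeasure (gammaMeasure Ls Ls) := isProbabilityMeasure_gammaMeasure hLs hLs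
  have hFi := integrable_F hLs hρ hγ
  have h1 : ∫ x in s, F ρ γ x ∂(gammaMeasure Ls Ls) ≤ ∫ x, F ρ γ x ∂(gammaMeasure Ls Ls) := by
    refine setIntegral_le_integral hFi ?_
    filter_upwards [ae_pos hLs] with x hx using F_nonneg hρ hγ hx.le
  have h2 : ∫ _x in s, c ∂(gammaMeasure Ls Ls) ≤ ∫ x in s, F ρ γ x ∂(gammaMeasure Ls Ls) :=
    setIntegral_mono_on (integrableOn_const (measure_ne_top _ _))
      hFi.integrableOn hs hc
  rw [setIntegral_const, smul_eq_mul, mul_comm, measureReal_def] at h2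
  linarith

lemma ED_lower (hLs : 0 < Ls) {ε : ℝ} (hε : 0 < ε) :
    ∀ᶠ ρ : ℝ in atTop, ∀ γ : ℝ, 0 ≤ γ →
      ρ ^ (-(1 + max (1 - 1 / Ls) 0 + ε)) ≤ ∫ x, F ρ γ x ∂(gammaMeasure Ls Ls) := by
  set A := max (1 - 1 / Ls) 0 with hAdef
  have hA0 : 0 ≤ A := le_max_right _ _
  have hA1 : A < 1 := by
    have h1Ls : 0 < 1 / Ls := by positivity
    exact max_lt (by linarith) one_pos
  set ε₁ := (min ε 1) * (min 1 (1 / Ls)) / 2 with hε₁def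
  have hmin1 : 0 < min ε 1 := lt_min hε one_pos
  have hmin1' : min ε 1 ≤ 1 := min_le_right _ _
  have hmin1'' : min ε 1 ≤ ε := min_le_left _ _
  have hmin2 : 0 < min 1 (1 / Ls) := lt_min one_pos (by positivity)
  have hmin2' : min 1 (1 / Ls) ≤ 1 := min_le_left _ _
  have hmin2'' : min 1 (1 / Ls) ≤ 1 / Ls := min_le_right _ _
  have hε₁ : 0 < ε₁ := by positivity
  have hε₁ε : ε₁ ≤ ε / 2 := by nlinarith
  set b := A + ε₁ with hbdef
  have hb0 : 0 < b := by positivity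
  have hb1 : b < 1 := by
    rcases le_or_gt Ls 1 with h | h
    · have hA : A = 0 := max_eq_right (by
        have : 1 ≤ 1 / Ls := by rw [le_div_iff₀ hLs]; linarith
        linarith)
      have : ε₁ ≤ 1 / 2 := by nlinarith
      rw [hbdef, hA]; linarith
    · have h1Ls : 1 / Ls < 1 := by rw [div_lt_one hLs]; exact h
      have hA : A = 1 - 1 / Ls := max_eq_left (by linarith)
      have : ε₁ ≤ (1 / Ls) / 2 := by nlinarith
      have h1Ls0 : 0 < 1 / Ls := by positivity
      rw [hbdef, hA]; linarith
  have hexp : -(1 + A + ε / 2) ≤ b * (Ls - 1) - Ls := by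
    rcases le_or_gt 1 Ls with h | h
    · have h1Ls : 1 / Ls ≤ 1 := by rw [div_le_one hLs]; exact h
      have hA : A = 1 - 1 / Ls := max_eq_left (by linarith)
      have hkey : A * (Ls - 1) - Ls = -(1 + A) := by
        rw [hA]; field_simp; ring
      have h2 : 0 ≤ ε₁ * (Ls - 1) := mul_nonneg hε₁.le (by linarith)
      have : b * (Ls - 1) - Ls = A * (Ls - 1) - Ls + ε₁ * (Ls - 1) := by rw [hbdef]; ring
      rw [this, hkey]; linarith
    · have hA : A = 0 := max_eq_right (by
        have : 1 ≤ 1 / Ls := by rw [le_div_iff₀ hLs]; linarith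
        linarith)
      have h2 : ε₁ * (Ls - 1) ≥ -ε₁ := by nlinarith
      have : b * (Ls - 1) - Ls = ε₁ * (Ls - 1) - Ls := by rw [hbdef, hA]; ring
      rw [this, hA]; linarith
  have hg := Real.Gamma_pos_of_pos hLs
  have hr := Real.rpow_pos_of_pos hLs Ls
  set c₀ := Ls ^ Ls / Real.Gamma Ls * Real.exp (-Ls) / Ls with hc₀def
  have hc₀ : 0 < c₀ := by positivity
  set c₂ := (gammaMeasure Ls Ls (Icc 2 3)).toReal with hc₂def
  have hc₂ : 0 < c₂ := meas_Icc_pos hLs two_pos (by norm_num)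
  have ht : Tendsto (fun ρ : ℝ => ρ ^ (ε / 2)) atTop atTop :=
    tendsto_rpow_atTop (by linarith)
  have ht2 : Tendsto (fun ρ : ℝ => ρ ^ b) atTop atTop := tendsto_rpow_atTop hb0
  filter_upwards [eventually_ge_atTop (1:ℝ),
    ht.eventually_ge_atTop (1 / (c₀ / 2 ^ Ls)),
    ht.eventually_ge_atTop (1 / (c₂ / 4)),
    ht2.eventually_ge_atTop 2] with ρ hρ1 hρ3 hρ4 hρT
  intro γ hγ
  have hρ0 : (0:ℝ) < ρ := lt_of_lt_of_le one_pos hρ1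
  set T := ρ ^ b with hTdef
  have hT0 : 0 < T := Real.rpow_pos_of_pos hρ0 b
  have hT2 : (2:ℝ) ≤ T := hρT
  have hTρ : T ≤ ρ := by
    have := Real.rpow_le_rpow_of_exponent_le hρ1 hb1.le
    rwa [Real.rpow_one] at this
  rcases le_or_gt T γ with hcase | hcase
  · -- γ large: use branch 1 on [0, T/(2ρ)]
    set s := T / (2 * ρ) with hsdef
    have hs0 : 0 < s := by positivity
    have hs1 : s ≤ 1 := by
      rw [hsdef, div_le_one (by positivity)]; linarith
    have hpoint : ∀ x ∈ Icc (0:ℝ) s, T⁻¹ ≤ F ρ γ x := by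
      rintro x ⟨hx0, hxs⟩
      have hρx : ρ * x ≤ T / 2 := by
        have := mul_le_mul_of_nonneg_left hxs hρ0.le
        rw [hsdef] at this
        calc ρ * x ≤ ρ * (T / (2 * ρ)) := this
          _ = T / 2 := by field_simp
      have hbranch : ρ * x < γ := by linarith
      rw [F, if_pos hbranch]
      have hd : 1 + ρ * x ≤ T := by linarith
      have : T⁻¹ ≤ (1 + ρ * x)⁻¹ := by
        apply inv_anti₀ (by positivity) hd
      exact this
    have hm := meas_Icc0 hLs hs0 hs1
    have hstep := integral_F_ge hLs hρ1 hγ measurableSet_Icc (by positivity) hpoint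
    have hchain : T⁻¹ * (c₀ * s ^ Ls) ≤ T⁻¹ * (gammaMeasure Ls Ls (Icc 0 s)).toReal := by
      apply mul_le_mul_of_nonneg_left _ (by positivity)
      calc c₀ * s ^ Ls = Ls ^ Ls / Real.Gamma Ls * Real.exp (-Ls) / Ls * s ^ Ls := by
            rw [hc₀def]
        _ ≤ _ := hm
    have heq : T⁻¹ * (c₀ * s ^ Ls) = c₀ / 2 ^ Ls * ρ ^ (b * (Ls - 1) - Ls) := by
      have e1 : s ^ Ls = T ^ Ls / (2 ^ Ls * ρ ^ Ls) := by
        rw [hsdef, Real.div_rpow hT0.le (by positivity),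
          Real.mul_rpow (by norm_num) hρ0.le]
      have e2 : T⁻¹ * T ^ Ls = ρ ^ (b * (Ls - 1)) := by
        rw [Real.rpow_mul hρ0.le, ← hTdef, ← Real.rpow_neg_one T,
          ← Real.rpow_add hT0]
        congr 1
        ring
      have e3 : ρ ^ (b * (Ls - 1)) / ρ ^ Ls = ρ ^ (b * (Ls - 1) - Ls) :=
        (Real.rpow_sub hρ0 _ _).symm
      calc T⁻¹ * (c₀ * s ^ Ls) = c₀ / 2 ^ Ls * (T⁻¹ * T ^ Ls / ρ ^ Ls) := by
            rw [e1]; ring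
        _ = c₀ / 2 ^ Ls * ρ ^ (b * (Ls - 1) - Ls) := by rw [e2, e3]
    have hfin : ρ ^ (-(1 + A + ε)) ≤ c₀ / 2 ^ Ls * ρ ^ (b * (Ls - 1) - Ls) :=
      key_low hρ1 (by positivity) hρ3 hexp
    calc ρ ^ (-(1 + A + ε)) ≤ c₀ / 2 ^ Ls * ρ ^ (b * (Ls - 1) - Ls) := hfin
      _ = T⁻¹ * (c₀ * s ^ Ls) := heq.symm
      _ ≤ T⁻¹ * (gammaMeasure Ls Ls (Icc 0 s)).toReal := hchain
      _ ≤ _ := hstep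
  · -- γ small: use branch 2 on [2,3]
    have hpoint : ∀ x ∈ Icc (2:ℝ) 3, (4 * (T * ρ))⁻¹ ≤ F ρ γ x := by
      rintro x ⟨hx2, hx3⟩
      have hρx : 2 * ρ ≤ ρ * x := by nlinarith
      have hbranch : ¬ ρ * x < γ := by
        push_neg; calc γ ≤ T := hcase.le
          _ ≤ ρ := hTρ
          _ ≤ 2 * ρ := by linarith
          _ ≤ ρ * x := hρx
      rw [F, if_neg hbranch, denom_eq]
      have hdpos : 0 < γ * ρ + (1 + ρ) + ρ * x := by positivity
      apply inv_anti₀ hdpos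
      have h1 : γ * ρ ≤ T * ρ := mul_le_mul_of_nonneg_right hcase.le hρ0.le
      have h2 : ρ * x ≤ ρ * 3 := mul_le_mul_of_nonneg_left hx3 hρ0.le
      have h5 : 2 * ρ ≤ T * ρ := mul_le_mul_of_nonneg_right hT2 hρ0.le
      linarith
    have hstep := integral_F_ge hLs hρ1 hγ measurableSet_Icc
      (by positivity) hpoint
    have heq : (4 * (T * ρ))⁻¹ * c₂ = c₂ / 4 * ρ ^ (-(b + 1)) := by
      have e1 : T * ρ = ρ ^ (b + 1) := by
        rw [Real.rpow_add hρ0, Real.rpow_one]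
      rw [e1, Real.rpow_neg hρ0.le]
      field_simp
    have hfin : ρ ^ (-(1 + A + ε)) ≤ c₂ / 4 * ρ ^ (-(b + 1)) := by
      apply key_low hρ1 (by positivity) hρ4
      rw [hbdef]; linarith
    calc ρ ^ (-(1 + A + ε)) ≤ c₂ / 4 * ρ ^ (-(b + 1)) := hfin
      _ = (4 * (T * ρ))⁻¹ * c₂ := heq.symm
      _ ≤ _ := hstep

lemma pdf_le (hLs : 0 < Ls) {x : ℝ} (hx : 0 ≤ x) :
    gammaPDFReal Ls Ls x ≤ Ls ^ Ls / Real.Gamma Ls * x ^ (Ls - 1) := by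
  rw [gammaPDFReal, if_pos hx]
  have h1 : Real.exp (-(Ls * x)) ≤ 1 := Real.exp_le_one_iff.mpr (by nlinarith)
  have hg := Real.Gamma_pos_of_pos hLs
  have hr := Real.rpow_pos_of_pos hLs Ls
  have hxp : (0:ℝ) ≤ x ^ (Ls - 1) := Real.rpow_nonneg hx _
  nlinarith [mul_nonneg (le_of_lt (div_pos hr hg)) hxp]

set_option maxHeartbeats 1000000 in
lemma ED_upper (hLs : 0 < Ls) {ε : ℝ} (hε : 0 < ε) :
    ∀ᶠ ρ : ℝ in atTop, ∃ γ : ℝ, 0 ≤ γ ∧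
      ∫ x, F ρ γ x ∂(gammaMeasure Ls Ls) ≤ ρ ^ (-(1 + max (1 - 1 / Ls) 0 - ε)) := by
  haveI : IsProbabilityMeasure (gammaMeasure Ls Ls) := isProbabilityMeasure_gammaMeasure hLs hLs
  have ht : Tendsto (fun ρ : ℝ => ρ ^ (ε / 2)) atTop atTop :=
    tendsto_rpow_atTop (by linarith)
  rcases le_or_gt Ls 1 with hcase | hcase
  · -- Ls ≤ 1 : take γ = 0
    have hA : max (1 - 1 / Ls) 0 = 0 := max_eq_right (by
      have : 1 ≤ 1 / Ls := by rw [le_div_iff₀ hLs]; linarith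
      linarith)
    rw [hA]
    filter_upwards [eventually_ge_atTop (1:ℝ)] with ρ hρ1
    refine ⟨0, le_rfl, ?_⟩
    have hρ0 : (0:ℝ) < ρ := lt_of_lt_of_le one_pos hρ1
    have hb : ∫ x, F ρ 0 x ∂(gammaMeasure Ls Ls)
        ≤ ∫ _x, (1 + ρ)⁻¹ ∂(gammaMeasure Ls Ls) := by
      apply integral_mono_ae (integrable_F hLs hρ1 le_rfl) (integrable_const _)
      filter_upwards [ae_pos hLs] with x hx
      have hnb : ¬ ρ * x < 0 := not_lt.mpr (by positivity)
      rw [F, if_neg hnb, show (0+1) * (1+ρ) + ρ * x - 0 = 1 + ρ + ρ * x by ring]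
      exact inv_anti₀ (by positivity) (by nlinarith)
    rw [integral_const, probReal_univ, one_smul] at hb
    calc ∫ x, F ρ 0 x ∂(gammaMeasure Ls Ls) ≤ (1 + ρ)⁻¹ := hb
      _ ≤ ρ⁻¹ := inv_anti₀ hρ0 (by linarith)
      _ = ρ ^ (-1 : ℝ) := (Real.rpow_neg_one ρ).symm
      _ ≤ ρ ^ (-(1 + 0 - ε)) := Real.rpow_le_rpow_of_exponent_le hρ1 (by linarith)
  · -- Ls > 1
    set a := 1 - 1 / Ls with hadef
    have h1Ls : 1 / Ls < 1 := by rw [div_lt_one hLs]; exact hcase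
    have h1Ls0 : 0 < 1 / Ls := by positivity
    have ha0 : 0 < a := by rw [hadef]; linarith
    have ha1 : a < 1 := by rw [hadef]; linarith
    have hA : max (1 - 1 / Ls) 0 = a := max_eq_left ha0.le
    rw [hA]
    set ε₂ := min (ε / 2) (1 / 2) with hε₂def
    have hε₂0 : 0 < ε₂ := lt_min (by linarith) (by norm_num)
    have hε₂a : ε₂ ≤ ε / 2 := min_le_left _ _
    have hε₂b : ε₂ ≤ 1 / 2 := min_le_right _ _
    set θ := 1 - ε₂ with hθdef
    have hθ0 : 0 < θ := by rw [hθdef]; linarith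
    have hθ1 : θ < 1 := by rw [hθdef]; linarith
    have hθLs : θ < Ls := by linarith
    have hLsθ : 0 < Ls - θ := by linarith
    have hg := Real.Gamma_pos_of_pos hLs
    have hr := Real.rpow_pos_of_pos hLs Ls
    set C := Ls ^ Ls / Real.Gamma Ls with hCdef
    have hC : 0 < C := by positivity
    set K := C / (Ls - θ) with hKdef
    have hK : 0 < K := by positivity
    filter_upwards [eventually_ge_atTop (1:ℝ), ht.eventually_ge_atTop (2 * K),
      ht.eventually_ge_atTop 2] with ρ hρ1 hρ2 hρ3
    have hρ0 : (0:ℝ) < ρ := lt_of_lt_of_le one_pos hρ1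
    set γ := ρ ^ a with hγdef
    have hγ0 : 0 < γ := Real.rpow_pos_of_pos hρ0 a
    refine ⟨γ, hγ0.le, ?_⟩
    set t := ρ ^ (a - 1) with htdef
    have ht0 : 0 < t := Real.rpow_pos_of_pos hρ0 _
    have hγρt : γ / ρ = t := by
      have h' : ρ ^ (a - 1) = ρ ^ a / ρ ^ (1:ℝ) := Real.rpow_sub hρ0 a 1
      rw [Real.rpow_one] at h'
      rw [hγdef, htdef, h']
    set ind := fun x : ℝ => Set.indicator (Ioc 0 t) (fun y => (ρ * y) ^ (-θ)) x with hinddef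
    have hind_meas : Measurable ind := by
      apply Measurable.indicator _ measurableSet_Ioc
      fun_prop
    have hind_nonneg : ∀ x, 0 ≤ ind x :=
      fun x => Set.indicator_nonneg
        (fun y hy => Real.rpow_nonneg (mul_nonneg hρ0.le hy.1.le) _) x
    -- dominating function for integrability
    set dom := fun x : ℝ => Set.indicator (Ioc 0 t) (fun y => C * ρ ^ (-θ) * y ^ (Ls - 1 - θ)) x
      with hdomdef
    have hdomInt : IntegrableOn (fun y : ℝ => C * ρ ^ (-θ) * y ^ (Ls - 1 - θ)) (Ioc 0 t) := by
      have := (intervalIntegral.intervalIntegrable_rpow' (r := Ls - 1 - θ)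
        (by linarith)).const_mul (C * ρ ^ (-θ)) (a := 0) (b := t)
      rwa [intervalIntegrable_iff_integrableOn_Ioc_of_le ht0.le] at this
    have hdomInt' : Integrable dom := hdomInt.integrable_indicator measurableSet_Ioc
    -- pointwise domination of  pdf * ind
    have hptwise : ∀ x : ℝ, x ∈ Ioc 0 t →
        gammaPDFReal Ls Ls x * (ρ * x) ^ (-θ) ≤ C * ρ ^ (-θ) * x ^ (Ls - 1 - θ) := by
      rintro x ⟨hx0, hxt⟩
      have h1 : gammaPDFReal Ls Ls x ≤ C * x ^ (Ls - 1) := pdf_le hLs hx0.le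
      have h2 : (ρ * x) ^ (-θ) = ρ ^ (-θ) * x ^ (-θ) := Real.mul_rpow hρ0.le hx0.le
      have h3 : x ^ (Ls - 1) * x ^ (-θ) = x ^ (Ls - 1 - θ) := by
        rw [← Real.rpow_add hx0, show Ls - 1 + -θ = Ls - 1 - θ from by ring]
      have h4 : 0 ≤ (ρ * x) ^ (-θ) := Real.rpow_nonneg (by positivity) _
      calc gammaPDFReal Ls Ls x * (ρ * x) ^ (-θ) ≤ C * x ^ (Ls - 1) * (ρ * x) ^ (-θ) :=
            mul_le_mul_of_nonneg_right h1 h4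
        _ = C * ρ ^ (-θ) * (x ^ (Ls - 1) * x ^ (-θ)) := by rw [h2]; ring
        _ = C * ρ ^ (-θ) * x ^ (Ls - 1 - θ) := by rw [h3]
    have hpdf_nonneg := gammaPDFReal_nonneg hLs hLs
    -- integrability of ind w.r.t. gammaMeasure
    have hind_int : Integrable ind (gammaMeasure Ls Ls) := by
      rw [show gammaMeasure Ls Ls
          = volume.withDensity (fun x => ENNReal.ofReal (gammaPDFReal Ls Ls x)) from rfl,
        integrable_withDensity_iff (measurable_gammaPDFReal Ls Ls).ennreal_ofReal
        (Filter.Eventually.of_forall fun x => ENNReal.ofReal_lt_top)]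
      have heq : (fun x => ind x * (ENNReal.ofReal (gammaPDFReal Ls Ls x)).toReal)
          = fun x => ind x * gammaPDFReal Ls Ls x := by
        funext x
        rw [ENNReal.toReal_ofReal (hpdf_nonneg x)]
      rw [heq]
      refine Integrable.mono' hdomInt' ((hind_meas.mul
        (measurable_gammaPDFReal Ls Ls)).aestronglyMeasurable) ?_
      refine Filter.Eventually.of_forall fun x => ?_
      rw [Real.norm_eq_abs, abs_of_nonneg (mul_nonneg (hind_nonneg x) (hpdf_nonneg x))]
      by_cases hx : x ∈ Ioc 0 t
      · simp only [hinddef, hdomdef, Set.indicator_of_mem hx]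
        calc (ρ * x) ^ (-θ) * gammaPDFReal Ls Ls x
            = gammaPDFReal Ls Ls x * (ρ * x) ^ (-θ) := by ring
          _ ≤ _ := hptwise x hx
      · simp only [hinddef, hdomdef, Set.indicator_of_notMem hx, zero_mul]
        exact le_rfl
    -- F ≤ G a.e.
    have hFG : ∀ᵐ x ∂(gammaMeasure Ls Ls), F ρ γ x ≤ ind x + (γ * ρ)⁻¹ := by
      filter_upwards [ae_pos hLs] with x hx
      by_cases hb : ρ * x < γ
      · rw [F, if_pos hb]
        have hxt : x ∈ Ioc 0 t := by
          refine ⟨hx, ?_⟩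
          rw [← hγρt]
          rw [le_div_iff₀ hρ0]
          linarith [mul_comm x ρ]
        simp only [hinddef, Set.indicator_of_mem hxt]
        have hρx : 0 < ρ * x := by positivity
        have e1 : (ρ * x) ^ θ ≤ 1 + ρ * x := by
          calc (ρ * x) ^ θ ≤ (1 + ρ * x) ^ θ :=
                Real.rpow_le_rpow hρx.le (by linarith) hθ0.le
            _ ≤ (1 + ρ * x) ^ (1:ℝ) :=
                Real.rpow_le_rpow_of_exponent_le (by linarith) hθ1.le
            _ = 1 + ρ * x := Real.rpow_one _
        have h1 : (1 + ρ * x)⁻¹ ≤ (ρ * x) ^ (-θ) := by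
          rw [Real.rpow_neg hρx.le]
          exact inv_anti₀ (Real.rpow_pos_of_pos hρx θ) e1
        have h2 : 0 ≤ (γ * ρ)⁻¹ := by positivity
        linarith
      · rw [F, if_neg hb, denom_eq]
        have h1 : (γ * ρ + (1 + ρ) + ρ * x)⁻¹ ≤ (γ * ρ)⁻¹ := by
          apply inv_anti₀ (by positivity)
          nlinarith
        linarith [hind_nonneg x]
    -- integrate
    have hmono : ∫ x, F ρ γ x ∂(gammaMeasure Ls Ls)
        ≤ ∫ x, (ind x + (γ * ρ)⁻¹) ∂(gammaMeasure Ls Ls) := by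
      apply integral_mono_of_nonneg _ (hind_int.add (integrable_const _)) hFG
      filter_upwards [ae_pos hLs] with x hx using F_nonneg hρ1 hγ0.le hx.le
    have hsplit : ∫ x, (ind x + (γ * ρ)⁻¹) ∂(gammaMeasure Ls Ls)
        = (∫ x, ind x ∂(gammaMeasure Ls Ls)) + (γ * ρ)⁻¹ := by
      rw [integral_add hind_int (integrable_const _), integral_const, probReal_univ,
        one_smul]
    -- compute the indicator integral
    have hindval : ∫ x, ind x ∂(gammaMeasure Ls Ls) ≤ K * (ρ ^ (-θ) * t ^ (Ls - θ)) := by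
      rw [integral_gamma hLs]
      have heq2 : (fun x => gammaPDFReal Ls Ls x * ind x)
          = Set.indicator (Ioc 0 t) (fun x => gammaPDFReal Ls Ls x * (ρ * x) ^ (-θ)) := by
        funext x
        by_cases hx : x ∈ Ioc 0 t <;>
          simp [hinddef, hx, Set.indicator_of_mem, Set.indicator_of_notMem]
      rw [heq2, integral_indicator measurableSet_Ioc]
      have hLHSint : IntegrableOn (fun x => gammaPDFReal Ls Ls x * (ρ * x) ^ (-θ)) (Ioc 0 t) := by
        refine Integrable.mono' hdomInt ((measurable_gammaPDFReal Ls Ls).mul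
          (by fun_prop)).aestronglyMeasurable.restrict ?_
        refine (ae_restrict_iff' measurableSet_Ioc).mpr (Filter.Eventually.of_forall
          fun x hx => ?_)
        rw [Real.norm_eq_abs, abs_of_nonneg (mul_nonneg (hpdf_nonneg x)
          (Real.rpow_nonneg (mul_nonneg hρ0.le hx.1.le) _))]
        exact hptwise x hx
      calc ∫ x in Ioc 0 t, gammaPDFReal Ls Ls x * (ρ * x) ^ (-θ)
          ≤ ∫ x in Ioc 0 t, C * ρ ^ (-θ) * x ^ (Ls - 1 - θ) :=
            setIntegral_mono_on hLHSint hdomInt measurableSet_Ioc hptwise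
        _ = C * ρ ^ (-θ) * ∫ x in Ioc 0 t, x ^ (Ls - 1 - θ) := by
            rw [integral_const_mul]
        _ = C * ρ ^ (-θ) * (t ^ (Ls - θ) / (Ls - θ)) := by
            rw [← intervalIntegral.integral_of_le ht0.le,
              integral_rpow (Or.inl (by linarith)),
              show Ls - 1 - θ + 1 = Ls - θ by ring,
              Real.zero_rpow (ne_of_gt hLsθ)]
            ring
        _ = K * (ρ ^ (-θ) * t ^ (Ls - θ)) := by rw [hKdef]; ring
    -- final exponent computation
    set e₁ := -θ + (a - 1) * (Ls - θ) with he₁def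
    have hrpow1 : ρ ^ (-θ) * t ^ (Ls - θ) = ρ ^ e₁ := by
      rw [htdef, ← Real.rpow_mul hρ0.le, ← Real.rpow_add hρ0]
    have hγρ : (γ * ρ)⁻¹ = ρ ^ (-(1 + a)) := by
      have h' : γ * ρ = ρ ^ (a + 1) := by rw [hγdef, Real.rpow_add hρ0, Real.rpow_one]
      rw [h', ← Real.rpow_neg hρ0.le]
      congr 1
      ring
    have he₁ : e₁ ≤ -(1 + a - ε / 2) := by
      have heq : e₁ = -(1 + θ * a) := by
        rw [he₁def, hadef]
        field_simp
        ring
      rw [heq, hθdef]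
      nlinarith
    have h6a : 2 * K * ρ ^ e₁ ≤ ρ ^ (-(1 + a - ε)) :=
      key_up (D := 1 + a) hρ1 hρ2 (by linarith : e₁ ≤ -((1 + a) - ε / 2))
    have h6b : 2 * ρ ^ (-(1 + a)) ≤ ρ ^ (-(1 + a - ε)) :=
      key_up (D := 1 + a) (K := 2) hρ1 hρ3
        (by linarith : -(1 + a) ≤ -((1 + a) - ε / 2))
    calc ∫ x, F ρ γ x ∂(gammaMeasure Ls Ls)
        ≤ (∫ x, ind x ∂(gammaMeasure Ls Ls)) + (γ * ρ)⁻¹ := le_trans hmono (le_of_eq hsplit)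
      _ ≤ K * (ρ ^ (-θ) * t ^ (Ls - θ)) + (γ * ρ)⁻¹ := add_le_add hindval le_rfl
      _ = K * ρ ^ e₁ + ρ ^ (-(1 + a)) := by rw [hrpow1, hγρ]
      _ ≤ ρ ^ (-(1 + a - ε)) := by linarith

end PIE

open MeasureTheory ProbabilityTheory Filter

/-- Lemma 4: distortion exponent of the partially informed encoder lower
bound evaluated at the ergodic channel capacity, for Nakagami side information with
shape `L_s`: it equals `1 + (1 − 1/L_s)⁺`. -/
theorem partially_informed_exponent
    (Ls : ℝ) (hLs : 0 < Ls) :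
    Tendsto (fun ρ : ℝ =>
        -(Real.log (sInf {d : ℝ | ∃ γhat : ℝ, 0 ≤ γhat ∧
            d = ∫ x, (if ρ * x < γhat then (1 + ρ * x)⁻¹
                else ((γhat + 1) * (1 + ρ) + ρ * x - γhat)⁻¹)
              ∂(gammaMeasure Ls Ls)}) / Real.log ρ))
      atTop (nhds (1 + max (1 - 1 / Ls) 0)) := by
  rw [Metric.tendsto_nhds]
  intro ε hε
  have hl := PIE.ED_lower hLs (half_pos hε)
  have hu := PIE.ED_upper hLs (half_pos hε)
  filter_upwards [hl, hu, eventually_gt_atTop (1:ℝ)] with ρ hlo hup hρ1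
  have hρ0 : (0:ℝ) < ρ := lt_trans one_pos hρ1
  set A := max (1 - 1 / Ls) 0 with hA
  set S := {d : ℝ | ∃ γhat : ℝ, 0 ≤ γhat ∧
      d = ∫ x, (if ρ * x < γhat then (1 + ρ * x)⁻¹
          else ((γhat + 1) * (1 + ρ) + ρ * x - γhat)⁻¹) ∂(gammaMeasure Ls Ls)} with hS
  have hFeq : ∀ γ : ℝ, (∫ x, (if ρ * x < γ then (1 + ρ * x)⁻¹
      else ((γ + 1) * (1 + ρ) + ρ * x - γ)⁻¹) ∂(gammaMeasure Ls Ls))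
      = ∫ x, PIE.F ρ γ x ∂(gammaMeasure Ls Ls) := fun γ => rfl
  have hne : S.Nonempty := ⟨_, 0, le_rfl, rfl⟩
  set L := ρ ^ (-(1 + A + ε / 2)) with hL
  have hL0 : 0 < L := Real.rpow_pos_of_pos hρ0 _
  have hlow : ∀ d ∈ S, L ≤ d := by
    rintro d ⟨γ, hγ, rfl⟩
    rw [hFeq γ]
    exact hlo γ hγ
  have hbdd : BddBelow S := ⟨L, hlow⟩
  have hSL : L ≤ sInf S := le_csInf hne hlow
  obtain ⟨γu, hγu, hub⟩ := hup
  have hSU : sInf S ≤ ρ ^ (-(1 + A - ε / 2)) := by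
    refine le_trans (csInf_le hbdd ⟨γu, hγu, (hFeq γu).symm⟩) ?_
    exact hub
  have hS0 : 0 < sInf S := lt_of_lt_of_le hL0 hSL
  have hlρ : 0 < Real.log ρ := Real.log_pos hρ1
  have h1 : -(1 + A + ε / 2) * Real.log ρ ≤ Real.log (sInf S) := by
    have := Real.log_le_log hL0 hSL
    rwa [hL, Real.log_rpow hρ0] at this
  have h2 : Real.log (sInf S) ≤ -(1 + A - ε / 2) * Real.log ρ := by
    have := Real.log_le_log hS0 hSU
    rwa [Real.log_rpow hρ0] at this
  have d1 : Real.log (sInf S) / Real.log ρ ≤ -(1 + A - ε / 2) :=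
    (div_le_iff₀ hlρ).mpr (by linarith)
  have d2 : -(1 + A + ε / 2) ≤ Real.log (sInf S) / Real.log ρ :=
    (le_div_iff₀ hlρ).mpr (by linarith)
  rw [Real.dist_eq, abs_lt]
  constructor <;> [skip; skip] <;> linarith
end

section
/- Let L_c, L_s > 0 and let H₀ and Γ₀ be independent random variables, Gamma-distributed with shape L_c and rate L_c, and with shape L_s and rate L_s, respectively (each has mean 1). Then −lim_{ρ→∞} log( E[ ((1 + ρH₀)(1 + ρΓ₀))^{-1} ] ) / log ρ exists and equals min{L_c, 1} + min{L_s, 1}. -/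
open MeasureTheory ProbabilityTheory Filter
open scoped NNReal ENNReal
open Real

-- step 1: conversion lemma
lemma gmi {L : ℝ} (hL : 0 < L) (g : ℝ → ℝ) (hg : Measurable g) :
    ∫ x, g x ∂(gammaMeasure L L) = ∫ x, gammaPDFReal L L x * g x := by
  have h1 : gammaMeasure L L = volume.withDensity
      (fun x => ((Real.toNNReal (gammaPDFReal L L x) : ℝ≥0) : ℝ≥0∞)) := rfl
  rw [h1, integral_withDensity_eq_integral_smul
    ((measurable_gammaPDFReal L L).real_toNNReal) g]
  congr 1; ext x
  simp [NNReal.smul_def, Real.coe_toNNReal _ (gammaPDFReal_nonneg hL hL x)]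

lemma integrable_pdf {L : ℝ} (hL : 0 < L) : Integrable (gammaPDFReal L L) := by
  refine ⟨(measurable_gammaPDFReal L L).aestronglyMeasurable, ?_⟩
  rw [HasFiniteIntegral]
  have : ∀ x, ‖gammaPDFReal L L x‖ₑ = gammaPDF L L x := by
    intro x
    rw [gammaPDF]
    exact (Real.enorm_eq_ofReal (gammaPDFReal_nonneg hL hL x))
  simp_rw [this, lintegral_gammaPDF_eq_one hL hL]
  exact ENNReal.one_lt_top

lemma pdf_mul_bound {L ρ : ℝ} (hL : 0 < L) (hρ : 0 ≤ ρ) (x : ℝ) :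
    ‖gammaPDFReal L L x * (1 + ρ * x)⁻¹‖ ≤ gammaPDFReal L L x := by
  rcases le_or_gt 0 x with hx | hx
  · have h1 : (0:ℝ) < 1 + ρ * x := by positivity
    have h2 : (1 + ρ * x)⁻¹ ≤ 1 := by
      rw [inv_le_one_iff₀]; right; nlinarith
    have h3 : 0 ≤ (1 + ρ * x)⁻¹ := by positivity
    rw [Real.norm_eq_abs, abs_of_nonneg (mul_nonneg (gammaPDFReal_nonneg hL hL x) h3)]
    calc gammaPDFReal L L x * (1 + ρ * x)⁻¹ ≤ gammaPDFReal L L x * 1 :=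
          mul_le_mul_of_nonneg_left h2 (gammaPDFReal_nonneg hL hL x)
      _ = _ := mul_one _
  · have : gammaPDFReal L L x = 0 := by
      simp [gammaPDFReal, not_le.mpr hx]
    simp [this]

lemma integrable_integrand {L ρ : ℝ} (hL : 0 < L) (hρ : 0 ≤ ρ) :
    Integrable (fun x => gammaPDFReal L L x * (1 + ρ * x)⁻¹) := by
  refine (integrable_pdf hL).mono ?_ (ae_of_all _ (fun x => ?_))
  swap
  · calc ‖gammaPDFReal L L x * (1 + ρ * x)⁻¹‖ ≤ gammaPDFReal L L x := pdf_mul_bound hL hρ x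
      _ ≤ ‖gammaPDFReal L L x‖ := le_abs_self _
  exact ((measurable_gammaPDFReal L L).mul
    ((measurable_const.add (measurable_id.const_mul ρ)).inv)).aestronglyMeasurable

lemma J_eq {L ρ : ℝ} (hL : 0 < L) :
    ∫ x, (1 + ρ * x)⁻¹ ∂(gammaMeasure L L)
      = ∫ x, gammaPDFReal L L x * (1 + ρ * x)⁻¹ :=
  gmi hL _ ((measurable_const.add (measurable_id.const_mul ρ)).inv)

lemma integrand_nonneg {L ρ : ℝ} (hL : 0 < L) (hρ : 0 ≤ ρ) (x : ℝ) :
    0 ≤ gammaPDFReal L L x * (1 + ρ * x)⁻¹ := by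
  rcases le_or_gt 0 x with hx | hx
  · exact mul_nonneg (gammaPDFReal_nonneg hL hL x) (by positivity)
  · simp [gammaPDFReal, not_le.mpr hx]

lemma pdf_eq {L : ℝ} {x : ℝ} (hx : 0 ≤ x) :
    gammaPDFReal L L x = L ^ L / Real.Gamma L * x ^ (L - 1) * Real.exp (-(L * x)) := by
  rw [gammaPDFReal, if_pos hx]

lemma lower_bound {L : ℝ} (hL : 0 < L) :
    ∃ c₁ > 0, ∀ ρ : ℝ, 1 ≤ ρ →
      c₁ * ρ ^ (-(min L 1)) ≤ ∫ x, gammaPDFReal L L x * (1 + ρ * x)⁻¹ := by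
  set cL : ℝ := L ^ L / Real.Gamma L with hcL
  have hc : 0 < cL := div_pos (rpow_pos_of_pos hL L) (Real.Gamma_pos_of_pos hL)
  rcases le_total L 1 with h1 | h1
  · -- L ≤ 1 : use interval (0, ρ⁻¹]
    refine ⟨cL * Real.exp (-L) / 2 / L, by positivity, fun ρ hρ => ?_⟩
    have hρ0 : (0:ℝ) < ρ := by linarith
    have hmin : min L 1 = L := min_eq_left h1
    have hinv : (0:ℝ) < ρ⁻¹ := by positivity
    have hinvle : ρ⁻¹ ≤ 1 := by
      rw [inv_le_one_iff₀]; right; exact hρ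
    have step1 : ∫ x in Set.Ioc 0 ρ⁻¹, gammaPDFReal L L x * (1 + ρ * x)⁻¹
        ≤ ∫ x, gammaPDFReal L L x * (1 + ρ * x)⁻¹ :=
      setIntegral_le_integral (integrable_integrand hL (by linarith))
        (ae_of_all _ (integrand_nonneg hL (by linarith)))
    have step2 : ∫ x in Set.Ioc 0 ρ⁻¹, (cL * Real.exp (-L) / 2) * x ^ (L - 1)
        ≤ ∫ x in Set.Ioc 0 ρ⁻¹, gammaPDFReal L L x * (1 + ρ * x)⁻¹ := by
      refine setIntegral_mono_on ?_ ?_ measurableSet_Ioc ?_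
      · exact (((intervalIntegral.intervalIntegrable_rpow'
          (by linarith : (-1:ℝ) < L - 1)).1).const_mul _)
      · exact (integrable_integrand hL (by linarith)).integrableOn
      · intro x hx
        obtain ⟨hx0, hxr⟩ := hx
        have hx1 : x ≤ 1 := le_trans hxr hinvle
        have hrx : ρ * x ≤ 1 := by
          calc ρ * x ≤ ρ * ρ⁻¹ := by nlinarith
            _ = 1 := mul_inv_cancel₀ hρ0.ne'
        have hfx : (2:ℝ)⁻¹ ≤ (1 + ρ * x)⁻¹ := by
          apply inv_anti₀ (by positivity)
          linarith
        have hex : Real.exp (-L) ≤ Real.exp (-(L * x)) := by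
          apply Real.exp_le_exp.mpr; nlinarith
        rw [pdf_eq hx0.le]
        have hxp : (0:ℝ) < x ^ (L - 1) := rpow_pos_of_pos hx0 _
        calc cL * Real.exp (-L) / 2 * x ^ (L - 1)
            = (cL * x ^ (L-1)) * (Real.exp (-L) * 2⁻¹) := by ring
          _ ≤ (cL * x ^ (L-1)) * (Real.exp (-(L * x)) * (1 + ρ * x)⁻¹) := by
              apply mul_le_mul_of_nonneg_left _ (by positivity)
              exact mul_le_mul hex hfx (by positivity) (Real.exp_pos _).le
          _ = cL * x ^ (L-1) * Real.exp (-(L * x)) * (1 + ρ * x)⁻¹ := by ring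
    have step3 : ∫ x in Set.Ioc 0 ρ⁻¹, (cL * Real.exp (-L) / 2) * x ^ (L - 1)
        = (cL * Real.exp (-L) / 2) * ((ρ⁻¹) ^ L / L) := by
      rw [integral_const_mul]
      congr 1
      rw [← intervalIntegral.integral_of_le hinv.le,
        integral_rpow (Or.inl (by linarith : (-1:ℝ) < L - 1))]
      rw [Real.zero_rpow (by linarith : L - 1 + 1 ≠ 0)]
      ring_nf
    have hrw : (ρ⁻¹) ^ L = ρ ^ (-L) := by
      rw [Real.inv_rpow hρ0.le, Real.rpow_neg hρ0.le]
    rw [hmin]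
    calc cL * Real.exp (-L) / 2 / L * ρ ^ (-L)
        = (cL * Real.exp (-L) / 2) * (ρ ^ (-L) / L) := by ring
      _ = (cL * Real.exp (-L) / 2) * ((ρ⁻¹) ^ L / L) := by rw [hrw]
      _ = ∫ x in Set.Ioc 0 ρ⁻¹, (cL * Real.exp (-L) / 2) * x ^ (L - 1) := step3.symm
      _ ≤ ∫ x in Set.Ioc 0 ρ⁻¹, gammaPDFReal L L x * (1 + ρ * x)⁻¹ := step2
      _ ≤ _ := step1
  · -- 1 ≤ L : use interval [1, 2]
    refine ⟨cL * Real.exp (-(2*L)) / 3, by positivity, fun ρ hρ => ?_⟩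
    have hρ0 : (0:ℝ) < ρ := by linarith
    have hmin : min L 1 = 1 := min_eq_right h1
    have step1 : ∫ x in Set.Icc 1 2, gammaPDFReal L L x * (1 + ρ * x)⁻¹
        ≤ ∫ x, gammaPDFReal L L x * (1 + ρ * x)⁻¹ :=
      setIntegral_le_integral (integrable_integrand hL (by linarith))
        (ae_of_all _ (integrand_nonneg hL (by linarith)))
    have step2 : ∫ x in Set.Icc (1:ℝ) 2, (cL * Real.exp (-(2*L)) * (1 + 2*ρ)⁻¹)
        ≤ ∫ x in Set.Icc (1:ℝ) 2, gammaPDFReal L L x * (1 + ρ * x)⁻¹ := by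
      refine setIntegral_mono_on (integrableOn_const ?_) ?_ measurableSet_Icc ?_
      · rw [Real.volume_Icc]; exact ENNReal.ofReal_ne_top
      · exact (integrable_integrand hL (by linarith)).integrableOn
      · intro x hx
        obtain ⟨hx1, hx2⟩ := hx
        have hx0 : (0:ℝ) < x := by linarith
        have hxp : (1:ℝ) ≤ x ^ (L - 1) :=
          Real.one_le_rpow hx1 (by linarith)
        have hex : Real.exp (-(2*L)) ≤ Real.exp (-(L * x)) := by
          apply Real.exp_le_exp.mpr; nlinarith
        have hfx : (1 + 2*ρ)⁻¹ ≤ (1 + ρ * x)⁻¹ := by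
          apply inv_anti₀ (by positivity)
          nlinarith
        rw [pdf_eq hx0.le]
        calc cL * Real.exp (-(2*L)) * (1 + 2*ρ)⁻¹
            ≤ cL * Real.exp (-(L*x)) * (1 + ρ*x)⁻¹ := by
              apply mul_le_mul _ hfx (by positivity) (by positivity)
              exact mul_le_mul_of_nonneg_left hex hc.le
          _ ≤ (cL * x ^ (L-1)) * Real.exp (-(L*x)) * (1 + ρ*x)⁻¹ := by
              have : cL ≤ cL * x ^ (L-1) := by nlinarith
              apply mul_le_mul_of_nonneg_right _ (by positivity)
              exact mul_le_mul_of_nonneg_right this (Real.exp_pos _).le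
          _ = cL * x ^ (L-1) * Real.exp (-(L*x)) * (1 + ρ*x)⁻¹ := by ring
    have step3 : ∫ x in Set.Icc (1:ℝ) 2, (cL * Real.exp (-(2*L)) * (1 + 2*ρ)⁻¹)
        = cL * Real.exp (-(2*L)) * (1 + 2*ρ)⁻¹ := by
      rw [setIntegral_const]
      rw [Real.volume_real_Icc]
      norm_num
    rw [hmin]
    have hfin : cL * Real.exp (-(2*L)) / 3 * ρ ^ (-(1:ℝ))
        ≤ cL * Real.exp (-(2*L)) * (1 + 2*ρ)⁻¹ := by
      rw [Real.rpow_neg_one]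
      have h3 : (1 + 2*ρ)⁻¹ ≥ (3*ρ)⁻¹ := by
        apply inv_anti₀ (by positivity); linarith
      calc cL * Real.exp (-(2*L)) / 3 * ρ⁻¹
          = cL * Real.exp (-(2*L)) * (3*ρ)⁻¹ := by
            rw [mul_inv]; ring
        _ ≤ cL * Real.exp (-(2*L)) * (1 + 2*ρ)⁻¹ :=
            mul_le_mul_of_nonneg_left h3 (by positivity)
    calc cL * Real.exp (-(2*L)) / 3 * ρ ^ (-(1:ℝ))
        ≤ cL * Real.exp (-(2*L)) * (1 + 2*ρ)⁻¹ := hfin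
      _ = _ := step3.symm
      _ ≤ _ := step2.trans step1

lemma upper_bound {L : ℝ} (hL : 0 < L) :
    ∃ c₂ > 0, ∀ ρ : ℝ, 1 ≤ ρ →
      ∫ x, gammaPDFReal L L x * (1 + ρ * x)⁻¹
        ≤ c₂ * ρ ^ (-(min L 1)) * (1 + Real.log ρ) := by
  set cL : ℝ := L ^ L / Real.Gamma L with hcL
  have hc : 0 < cL := div_pos (rpow_pos_of_pos hL L) (Real.Gamma_pos_of_pos hL)
  set Ctot : ℝ := ∫ x, gammaPDFReal L L x with hCt
  have hCt0 : 0 ≤ Ctot := integral_nonneg (gammaPDFReal_nonneg hL hL)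
  refine ⟨cL / L + cL + Ctot + 1, by positivity, fun ρ hρ => ?_⟩
  have hρ0 : (0:ℝ) < ρ := by linarith
  set t : ℝ := ρ⁻¹ with htdef
  have ht0 : (0:ℝ) < t := by positivity
  have ht1 : t ≤ 1 := by rw [htdef, inv_le_one_iff₀]; right; exact hρ
  set m : ℝ := min L 1 with hm
  have hm0 : 0 < m := lt_min hL one_pos
  have hm1 : m ≤ 1 := min_le_right _ _
  have hmL : m ≤ L := min_le_left _ _
  have hI := integrable_integrand hL (le_trans zero_le_one hρ) (L := L)
  -- restrict to Ici 0
  have e0 : ∫ x, gammaPDFReal L L x * (1 + ρ * x)⁻¹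
      = ∫ x in Set.Ici 0, gammaPDFReal L L x * (1 + ρ * x)⁻¹ := by
    refine (setIntegral_eq_integral_of_forall_compl_eq_zero fun x hx => ?_).symm
    have hx' : x < 0 := by simpa using hx
    simp [gammaPDFReal, not_le.mpr hx']
  -- split
  have hdisj1 : Disjoint (Set.Icc (0:ℝ) t) (Set.Ioi t) :=
    Set.disjoint_left.mpr fun x hx hx' => absurd hx.2 (not_le.mpr hx')
  have hdisj2 : Disjoint (Set.Ioc t (1:ℝ)) (Set.Ioi 1) :=
    Set.disjoint_left.mpr fun x hx hx' => absurd hx.2 (not_le.mpr hx')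
  have e1 : ∫ x in Set.Ici 0, gammaPDFReal L L x * (1 + ρ * x)⁻¹
      = (∫ x in Set.Icc 0 t, gammaPDFReal L L x * (1 + ρ * x)⁻¹)
        + ∫ x in Set.Ioi t, gammaPDFReal L L x * (1 + ρ * x)⁻¹ := by
    rw [← setIntegral_union hdisj1 measurableSet_Ioi hI.integrableOn hI.integrableOn,
      Set.Icc_union_Ioi_eq_Ici ht0.le]
  have e2 : ∫ x in Set.Ioi t, gammaPDFReal L L x * (1 + ρ * x)⁻¹
      = (∫ x in Set.Ioc t 1, gammaPDFReal L L x * (1 + ρ * x)⁻¹)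
        + ∫ x in Set.Ioi 1, gammaPDFReal L L x * (1 + ρ * x)⁻¹ := by
    rw [← setIntegral_union hdisj2 measurableSet_Ioi hI.integrableOn hI.integrableOn,
      Set.Ioc_union_Ioi_eq_Ioi ht1]
  -- bound A
  have hApt : ∀ x ∈ Set.Icc (0:ℝ) t,
      gammaPDFReal L L x * (1 + ρ * x)⁻¹ ≤ cL * x ^ (L - 1) := by
    intro x hx
    obtain ⟨hx0, hxt⟩ := hx
    rw [pdf_eq hx0]
    have h1 : Real.exp (-(L * x)) ≤ 1 := Real.exp_le_one_iff.mpr (by nlinarith)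
    have h2 : (1 + ρ * x)⁻¹ ≤ 1 := by
      rw [inv_le_one_iff₀]; right; nlinarith
    have hxp : (0:ℝ) ≤ x ^ (L - 1) := (Real.rpow_nonneg hx0 _)
    have h3 : (0:ℝ) ≤ (1 + ρ * x)⁻¹ := by positivity
    calc cL * x ^ (L-1) * Real.exp (-(L*x)) * (1 + ρ*x)⁻¹
        ≤ cL * x ^ (L-1) * 1 * 1 := by
          apply mul_le_mul (mul_le_mul_of_nonneg_left h1 (by positivity)) h2 h3
          positivity
      _ = cL * x ^ (L-1) := by ring
  have hrpowInt : IntegrableOn (fun x : ℝ => cL * x ^ (L - 1)) (Set.Icc 0 t) := by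
    rw [integrableOn_Icc_iff_integrableOn_Ioc]
    exact ((intervalIntegral.intervalIntegrable_rpow'
      (by linarith : (-1:ℝ) < L - 1)).1).const_mul _
  have hA : ∫ x in Set.Icc 0 t, gammaPDFReal L L x * (1 + ρ * x)⁻¹
      ≤ cL * (t ^ L / L) := by
    have := setIntegral_mono_on hI.integrableOn hrpowInt measurableSet_Icc hApt
    refine le_trans this (le_of_eq ?_)
    rw [integral_Icc_eq_integral_Ioc, integral_const_mul]
    congr 1
    rw [← intervalIntegral.integral_of_le ht0.le,
      integral_rpow (Or.inl (by linarith : (-1:ℝ) < L - 1)),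
      Real.zero_rpow (by linarith : L - 1 + 1 ≠ 0)]
    ring_nf
  -- bound B
  have hxpow : ∀ x ∈ Set.Ioc t (1:ℝ), x ^ (L - 1) ≤ ρ ^ (1 - m) := by
    intro x hx
    obtain ⟨hxt, hx1⟩ := hx
    have hx0 : 0 < x := lt_trans ht0 hxt
    rcases le_total L 1 with hL1 | hL1
    · have hmeq : m = L := min_eq_left hL1
      have h1 : x ^ (L-1) ≤ t ^ (L-1) := by
        apply Real.rpow_le_rpow_of_nonpos ht0 hxt.le (by linarith)
      have h2 : t ^ (L-1) = ρ ^ (1 - m) := by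
        rw [htdef, Real.inv_rpow hρ0.le, ← Real.rpow_neg hρ0.le, hmeq]
        ring_nf
      linarith [h1, h2.le]
    · have hmeq : m = 1 := min_eq_right hL1
      have h1 : x ^ (L-1) ≤ 1 := Real.rpow_le_one hx0.le hx1 (by linarith)
      rw [hmeq]
      simpa using h1
  have hBpt : ∀ x ∈ Set.Ioc t (1:ℝ),
      gammaPDFReal L L x * (1 + ρ * x)⁻¹ ≤ (cL * ρ ^ (-m)) * x⁻¹ := by
    intro x hx
    obtain ⟨hxt, hx1⟩ := hx
    have hx0 : 0 < x := lt_trans ht0 hxt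
    rw [pdf_eq hx0.le]
    have h1 : Real.exp (-(L * x)) ≤ 1 := Real.exp_le_one_iff.mpr (by nlinarith)
    have hf : (1 + ρ * x)⁻¹ ≤ (ρ * x)⁻¹ := by
      apply inv_anti₀ (by positivity); linarith
    have hxp : (0:ℝ) ≤ x ^ (L - 1) := Real.rpow_nonneg hx0.le _
    calc cL * x ^ (L-1) * Real.exp (-(L*x)) * (1 + ρ*x)⁻¹
        ≤ cL * x ^ (L-1) * 1 * (ρ*x)⁻¹ := by
          apply mul_le_mul (mul_le_mul_of_nonneg_left h1 (by positivity)) hf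
            (by positivity) (by positivity)
      _ = (cL * ρ⁻¹ * x ^ (L-1)) * x⁻¹ := by rw [mul_inv]; ring
      _ ≤ (cL * ρ⁻¹ * ρ ^ (1-m)) * x⁻¹ := by
          apply mul_le_mul_of_nonneg_right _ (by positivity)
          apply mul_le_mul_of_nonneg_left (hxpow x ⟨hxt, hx1⟩) (by positivity)
      _ = (cL * ρ ^ (-m)) * x⁻¹ := by
          rw [← Real.rpow_neg_one ρ, mul_assoc cL, ← Real.rpow_add hρ0]
          have hexp : (-1) + (1 - m) = -m := by ring
          rw [hexp]
  have hinvInt : IntegrableOn (fun x : ℝ => (cL * ρ ^ (-m)) * x⁻¹) (Set.Ioc t 1) := by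
    apply Integrable.const_mul
    have hIcc : IntegrableOn (fun x : ℝ => x⁻¹) (Set.Icc t 1) := by
      apply ContinuousOn.integrableOn_Icc
      intro x hx
      exact (continuousAt_inv₀ (ne_of_gt (lt_of_lt_of_le ht0 hx.1))).continuousWithinAt
    exact hIcc.mono_set Set.Ioc_subset_Icc_self
  have hB : ∫ x in Set.Ioc t 1, gammaPDFReal L L x * (1 + ρ * x)⁻¹
      ≤ (cL * ρ ^ (-m)) * Real.log ρ := by
    have := setIntegral_mono_on hI.integrableOn hinvInt measurableSet_Ioc hBpt
    refine le_trans this (le_of_eq ?_)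
    rw [integral_const_mul]
    congr 1
    rw [← intervalIntegral.integral_of_le ht1, integral_inv
      (Set.notMem_uIcc_of_lt ht0 one_pos)]
    rw [htdef, one_div, inv_inv]
  -- bound C
  have hCpt : ∀ x ∈ Set.Ioi (1:ℝ),
      gammaPDFReal L L x * (1 + ρ * x)⁻¹ ≤ ρ⁻¹ * gammaPDFReal L L x := by
    intro x hx
    have hx1 : (1:ℝ) < x := hx
    have hf : (1 + ρ * x)⁻¹ ≤ ρ⁻¹ := by
      apply inv_anti₀ hρ0; nlinarith
    calc gammaPDFReal L L x * (1 + ρ * x)⁻¹ ≤ gammaPDFReal L L x * ρ⁻¹ :=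
        mul_le_mul_of_nonneg_left hf (gammaPDFReal_nonneg hL hL x)
      _ = ρ⁻¹ * gammaPDFReal L L x := mul_comm _ _
  have hC : ∫ x in Set.Ioi 1, gammaPDFReal L L x * (1 + ρ * x)⁻¹ ≤ ρ⁻¹ * Ctot := by
    have h1 := setIntegral_mono_on hI.integrableOn
      (((integrable_pdf hL).const_mul ρ⁻¹).integrableOn) measurableSet_Ioi hCpt
    refine le_trans h1 ?_
    rw [integral_const_mul]
    apply mul_le_mul_of_nonneg_left _ (by positivity)
    exact setIntegral_le_integral (integrable_pdf hL)
      (ae_of_all _ (gammaPDFReal_nonneg hL hL))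
  -- combine
  have hsum : ∫ x, gammaPDFReal L L x * (1 + ρ * x)⁻¹
      ≤ cL * (t ^ L / L) + (cL * ρ ^ (-m)) * Real.log ρ + ρ⁻¹ * Ctot := by
    rw [e0, e1, e2]
    linarith [hA, hB, hC]
  have htL : t ^ L ≤ ρ ^ (-m) := by
    have : t ^ L = ρ ^ (-L) := by
      rw [htdef, Real.inv_rpow hρ0.le, ← Real.rpow_neg hρ0.le]
    rw [this]
    exact Real.rpow_le_rpow_of_exponent_le hρ (by linarith)
  have hρinv : ρ⁻¹ ≤ ρ ^ (-m) := by
    rw [← Real.rpow_neg_one ρ]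
    exact Real.rpow_le_rpow_of_exponent_le hρ (by linarith)
  have hlog0 : 0 ≤ Real.log ρ := Real.log_nonneg hρ
  have hP : 0 < ρ ^ (-m) := Real.rpow_pos_of_pos hρ0 _
  refine le_trans hsum ?_
  have key1 : cL * (t ^ L / L) ≤ (cL / L) * ρ ^ (-m) := by
    have e : cL * (t ^ L / L) = (cL / L) * t ^ L := by ring
    rw [e]
    exact mul_le_mul_of_nonneg_left htL (by positivity)
  have key3 : ρ⁻¹ * Ctot ≤ ρ ^ (-m) * Ctot := mul_le_mul_of_nonneg_right hρinv hCt0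
  have hfin : (cL / L) * ρ ^ (-m) + (cL * ρ ^ (-m)) * Real.log ρ + ρ ^ (-m) * Ctot
      ≤ (cL / L + cL + Ctot + 1) * ρ ^ (-m) * (1 + Real.log ρ) := by
    nlinarith [mul_nonneg hP.le hlog0, mul_nonneg (mul_nonneg hP.le hlog0) hc.le,
      mul_nonneg (mul_nonneg hP.le hlog0) hCt0, mul_nonneg hP.le hc.le,
      mul_nonneg hP.le hCt0, hP.le,
      mul_nonneg (mul_nonneg hP.le hlog0) (div_nonneg hc.le hL.le)]
  linarith [key1, key3, hfin]

lemma aux_log_div : Tendsto (fun y : ℝ => Real.log (1 + y) / y) atTop (nhds 0) := by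
  have h1 : Tendsto (fun z : ℝ => Real.log z / z) atTop (nhds 0) := by
    have := Real.isLittleO_log_id_atTop
    rw [Asymptotics.isLittleO_iff_tendsto'] at this
    · exact this
    · filter_upwards [eventually_ne_atTop (0:ℝ)] with x hx h
      exact absurd h hx
  have h2 : Tendsto (fun y : ℝ => (1:ℝ) + y) atTop atTop :=
    tendsto_atTop_add_const_left _ _ tendsto_id
  have h3 : Tendsto (fun y : ℝ => Real.log (1 + y) / (1 + y)) atTop (nhds 0) :=
    h1.comp h2
  have h4 : Tendsto (fun y : ℝ => (1 + y) / y) atTop (nhds 1) := by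
    have : (fun y : ℝ => (1 + y) / y) =ᶠ[atTop] fun y => 1/y + 1 := by
      filter_upwards [eventually_ne_atTop (0:ℝ)] with y hy
      field_simp
    rw [tendsto_congr' this]
    have := tendsto_one_div_atTop_nhds_zero_nat (𝕜 := ℝ)
    simpa using (tendsto_const_nhds.div_atTop tendsto_id (f := fun _ : ℝ => (1:ℝ))).add
      (tendsto_const_nhds (x := (1:ℝ)))
  have h5 : (fun y : ℝ => Real.log (1 + y) / y) =ᶠ[atTop]
      fun y => (Real.log (1 + y) / (1 + y)) * ((1 + y) / y) := by
    filter_upwards [eventually_gt_atTop (0:ℝ)] with y hy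
    have : (1:ℝ) + y ≠ 0 := by linarith
    field_simp
  rw [tendsto_congr' h5]
  simpa using h3.mul h4

lemma single_limit {L : ℝ} (hL : 0 < L) :
    Tendsto (fun ρ : ℝ => -(Real.log (∫ x, (1 + ρ * x)⁻¹ ∂(gammaMeasure L L)) / Real.log ρ))
      atTop (nhds (min L 1)) := by
  obtain ⟨c₁, hc₁, hlow⟩ := lower_bound hL
  obtain ⟨c₂, hc₂, hupp⟩ := upper_bound hL
  set m : ℝ := min L 1 with hm
  have hm0 : 0 < m := lt_min hL one_pos
  -- limits of bounding functions
  have hloTend : Tendsto (fun ρ : ℝ =>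
      m - (Real.log c₂ + Real.log (1 + Real.log ρ)) / Real.log ρ) atTop (nhds m) := by
    have h1 : Tendsto (fun ρ : ℝ => Real.log c₂ / Real.log ρ) atTop (nhds 0) :=
      tendsto_const_nhds.div_atTop Real.tendsto_log_atTop
    have h2 : Tendsto (fun ρ : ℝ => Real.log (1 + Real.log ρ) / Real.log ρ) atTop (nhds 0) :=
      aux_log_div.comp Real.tendsto_log_atTop
    have h3 : Tendsto (fun ρ : ℝ =>
        (Real.log c₂ + Real.log (1 + Real.log ρ)) / Real.log ρ) atTop (nhds 0) := by
      have := h1.add h2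
      simp only [add_div] at this ⊢
      simpa using this
    simpa using tendsto_const_nhds.sub h3
  have hhiTend : Tendsto (fun ρ : ℝ => m - Real.log c₁ / Real.log ρ) atTop (nhds m) := by
    have h1 : Tendsto (fun ρ : ℝ => Real.log c₁ / Real.log ρ) atTop (nhds 0) :=
      tendsto_const_nhds.div_atTop Real.tendsto_log_atTop
    simpa using tendsto_const_nhds.sub h1
  refine tendsto_of_tendsto_of_tendsto_of_le_of_le' hloTend hhiTend ?_ ?_
  · -- lower bound eventually
    filter_upwards [eventually_gt_atTop (1:ℝ)] with ρ hρ
    have hρ1 : (1:ℝ) ≤ ρ := hρ.le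
    have hρ0 : (0:ℝ) < ρ := by linarith
    have hlρ : 0 < Real.log ρ := Real.log_pos hρ
    have hP : (0:ℝ) < ρ ^ (-m) := Real.rpow_pos_of_pos hρ0 _
    have hK0 : 0 < ∫ x, gammaPDFReal L L x * (1 + ρ * x)⁻¹ :=
      lt_of_lt_of_le (by positivity) (hlow ρ hρ1)
    have hKu := hupp ρ hρ1
    have hlog1 : (0:ℝ) < 1 + Real.log ρ := by linarith [Real.log_nonneg hρ1]
    have hlogK : Real.log (∫ x, gammaPDFReal L L x * (1 + ρ * x)⁻¹)
        ≤ Real.log c₂ + (-m) * Real.log ρ + Real.log (1 + Real.log ρ) := by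
      calc Real.log (∫ x, gammaPDFReal L L x * (1 + ρ * x)⁻¹)
          ≤ Real.log (c₂ * ρ ^ (-m) * (1 + Real.log ρ)) := Real.log_le_log hK0 hKu
        _ = Real.log c₂ + (-m) * Real.log ρ + Real.log (1 + Real.log ρ) := by
            rw [Real.log_mul (by positivity) hlog1.ne', Real.log_mul hc₂.ne' hP.ne',
              Real.log_rpow hρ0]
    rw [J_eq hL]
    have h1 : Real.log (∫ x, gammaPDFReal L L x * (1 + ρ * x)⁻¹) / Real.log ρ
        ≤ (Real.log c₂ + (-m) * Real.log ρ + Real.log (1 + Real.log ρ)) / Real.log ρ := by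
      gcongr
    have h2 : (Real.log c₂ + (-m) * Real.log ρ + Real.log (1 + Real.log ρ)) / Real.log ρ
        = -(m - (Real.log c₂ + Real.log (1 + Real.log ρ)) / Real.log ρ) := by
      field_simp
      ring
    linarith
  · -- upper bound eventually
    filter_upwards [eventually_gt_atTop (1:ℝ)] with ρ hρ
    have hρ1 : (1:ℝ) ≤ ρ := hρ.le
    have hρ0 : (0:ℝ) < ρ := by linarith
    have hlρ : 0 < Real.log ρ := Real.log_pos hρ
    have hP : (0:ℝ) < ρ ^ (-m) := Real.rpow_pos_of_pos hρ0 _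
    have hKl := hlow ρ hρ1
    have hK0 : 0 < ∫ x, gammaPDFReal L L x * (1 + ρ * x)⁻¹ :=
      lt_of_lt_of_le (by positivity) hKl
    have hlogK : Real.log c₁ + (-m) * Real.log ρ
        ≤ Real.log (∫ x, gammaPDFReal L L x * (1 + ρ * x)⁻¹) := by
      calc Real.log c₁ + (-m) * Real.log ρ
          = Real.log (c₁ * ρ ^ (-m)) := by
            rw [Real.log_mul hc₁.ne' hP.ne', Real.log_rpow hρ0]
        _ ≤ _ := Real.log_le_log (by positivity) hKl
    rw [J_eq hL]
    have h1 : (Real.log c₁ + (-m) * Real.log ρ) / Real.log ρ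
        ≤ Real.log (∫ x, gammaPDFReal L L x * (1 + ρ * x)⁻¹) / Real.log ρ := by
      gcongr
    have h2 : (Real.log c₁ + (-m) * Real.log ρ) / Real.log ρ
        = -(m - Real.log c₁ / Real.log ρ) := by
      field_simp
      ring
    linarith

/-- distortion exponent of the informed encoder lower bound for Nakagami
fading channel and side information: `Δ_inf = min{L_c,1} + min{L_s,1}`. -/
theorem informed_encoder_exponent
    (Lc Ls : ℝ) (hLc : 0 < Lc) (hLs : 0 < Ls) :
    Tendsto (fun ρ : ℝ =>
        -(Real.log (∫ p : ℝ × ℝ, ((1 + ρ * p.1) * (1 + ρ * p.2))⁻¹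
            ∂((gammaMeasure Lc Lc).prod (gammaMeasure Ls Ls))) / Real.log ρ))
      atTop (nhds (min Lc 1 + min Ls 1)) := by
  haveI : IsProbabilityMeasure (gammaMeasure Lc Lc) := isProbabilityMeasure_gammaMeasure hLc hLc
  haveI : IsProbabilityMeasure (gammaMeasure Ls Ls) := isProbabilityMeasure_gammaMeasure hLs hLs
  obtain ⟨c₁, hc₁, hlowc⟩ := lower_bound hLc
  obtain ⟨d₁, hd₁, hlows⟩ := lower_bound hLs
  have htend := (single_limit hLc).add (single_limit hLs)
  refine Tendsto.congr' ?_ htend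
  filter_upwards [eventually_ge_atTop (1:ℝ)] with ρ hρ
  have hρ0 : (0:ℝ) < ρ := by linarith
  set Jc : ℝ := ∫ x, (1 + ρ * x)⁻¹ ∂(gammaMeasure Lc Lc) with hJc
  set Js : ℝ := ∫ x, (1 + ρ * x)⁻¹ ∂(gammaMeasure Ls Ls) with hJs
  have hJc0 : 0 < Jc := by
    rw [hJc, J_eq hLc]
    exact lt_of_lt_of_le (by positivity) (hlowc ρ hρ)
  have hJs0 : 0 < Js := by
    rw [hJs, J_eq hLs]
    exact lt_of_lt_of_le (by positivity) (hlows ρ hρ)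
  have hprod : ∫ p : ℝ × ℝ, ((1 + ρ * p.1) * (1 + ρ * p.2))⁻¹
      ∂((gammaMeasure Lc Lc).prod (gammaMeasure Ls Ls)) = Jc * Js := by
    have e : (fun p : ℝ × ℝ => ((1 + ρ * p.1) * (1 + ρ * p.2))⁻¹)
        = fun p : ℝ × ℝ => (1 + ρ * p.1)⁻¹ * (1 + ρ * p.2)⁻¹ := by
      funext p; rw [mul_inv]
    rw [e, integral_prod_mul (fun x => (1 + ρ * x)⁻¹) (fun y => (1 + ρ * y)⁻¹)]
  rw [hprod, Real.log_mul hJc0.ne' hJs0.ne']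
  ring
end

section
/- Let L_c, L_s > 0 and let H₀ and Γ₀ be independent random variables, Gamma-distributed with shape L_c and rate L_c, and with shape L_s and rate L_s, respectively (each has mean 1). Then −lim_{ρ→∞} log( E[ (1 + ρH₀ + ρΓ₀)^{-1} ] ) / log ρ exists and equals min{L_s + L_c, 1}. -/
open MeasureTheory ProbabilityTheory Filter

section UncodedAux

open Real Set

lemma gammaMeasure_Iic_zero (a r : ℝ) : gammaMeasure a r (Iic 0) = 0 := by
  rw [gammaMeasure, withDensity_apply _ measurableSet_Iic,
    setLIntegral_congr (Iio_ae_eq_Iic (a := (0:ℝ))).symm]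
  exact lintegral_gammaPDF_of_nonpos le_rfl

lemma integrable_gammaPDFReal' {a r : ℝ} (ha : 0 < a) (hr : 0 < r) :
    Integrable (gammaPDFReal a r) := by
  refine ⟨(measurable_gammaPDFReal a r).aestronglyMeasurable, ?_⟩
  rw [hasFiniteIntegral_iff_ofReal (ae_of_all _ (gammaPDFReal_nonneg ha hr))]
  have : ∀ x, ENNReal.ofReal (gammaPDFReal a r x) = gammaPDF a r x := fun x => rfl
  simp_rw [this, lintegral_gammaPDF_eq_one ha hr]
  exact ENNReal.one_lt_top

lemma integrable_neg_rpow_gamma {a r s : ℝ} (ha : 0 < a) (hr : 0 < r) (hsa : s < a) :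
    Integrable (fun x : ℝ => x ^ (-s)) (gammaMeasure a r) := by
  have hm : Measurable (gammaPDF a r) := (measurable_gammaPDFReal a r).ennreal_ofReal
  rw [gammaMeasure, integrable_withDensity_iff hm
    (ae_of_all _ fun x => ENNReal.ofReal_lt_top)]
  have has : 0 < a - s := sub_pos.2 hsa
  set K := r ^ s * Real.Gamma (a - s) / Real.Gamma a with hK
  have h0 : ∀ᵐ x : ℝ, x ≠ (0:ℝ) := by
    rw [ae_iff]
    have : {x : ℝ | ¬ x ≠ 0} = {0} := by ext x; simp
    rw [this]; exact measure_singleton 0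
  refine (((integrable_gammaPDFReal' has hr).const_mul K).congr ?_)
  filter_upwards [h0] with x hx
  have htr : (gammaPDF a r x).toReal = gammaPDFReal a r x :=
    ENNReal.toReal_ofReal (gammaPDFReal_nonneg ha hr x)
  rw [htr]
  rcases hx.lt_or_gt with hneg | hpos
  · rw [gammaPDFReal, gammaPDFReal, if_neg (not_le.2 hneg), if_neg (not_le.2 hneg)]
    ring
  · rw [gammaPDFReal, gammaPDFReal, if_pos hpos.le, if_pos hpos.le]
    have hΓ : Real.Gamma (a - s) ≠ 0 := (Real.Gamma_pos_of_pos has).ne'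
    have hΓa : Real.Gamma a ≠ 0 := (Real.Gamma_pos_of_pos ha).ne'
    have h1 : r ^ s * r ^ (a - s) = r ^ a := by
      rw [← Real.rpow_add hr]; ring_nf
    have h2 : x ^ (-s) * x ^ (a - 1) = x ^ (a - s - 1) := by
      rw [← Real.rpow_add hpos]; ring_nf
    rw [hK]
    field_simp
    rw [← h1, ← h2]; ring

lemma gammaMeasure_Icc_ge' {a r t : ℝ} (ha : 0 < a) (hr : 0 < r) (ht0 : 0 < t) (ht1 : t ≤ 1) :
    r ^ a / Real.Gamma a * Real.exp (-r) / a * t ^ a ≤ (gammaMeasure a r (Icc 0 t)).toReal := by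
  have : IsProbabilityMeasure (gammaMeasure a r) := isProbabilityMeasure_gammaMeasure ha hr
  set c : ℝ := r ^ a / Real.Gamma a * Real.exp (-r) with hc
  have hcpos : 0 < c := by
    have := Real.Gamma_pos_of_pos ha
    positivity
  have hint : IntegrableOn (fun x : ℝ => c * x ^ (a - 1)) (Ioc 0 t) := by
    have := (intervalIntegrable_iff_integrableOn_Ioc_of_le ht0.le).mp
      (intervalIntegral.intervalIntegrable_rpow' (r := a - 1) (by linarith) (a := 0) (b := t))
    exact this.const_mul c
  have hval : ∫ x in Ioc 0 t, c * x ^ (a - 1) = c * (t ^ a / a) := by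
    rw [← intervalIntegral.integral_of_le ht0.le, intervalIntegral.integral_const_mul,
      integral_rpow (Or.inl (by linarith))]
    rw [Real.zero_rpow (by linarith : a - 1 + 1 ≠ 0)]
    ring_nf
  have h1 : ENNReal.ofReal (c * (t ^ a / a)) ≤ gammaMeasure a r (Icc 0 t) := by
    rw [gammaMeasure, withDensity_apply _ measurableSet_Icc]
    calc ENNReal.ofReal (c * (t ^ a / a))
        = ∫⁻ x in Ioc 0 t, ENNReal.ofReal (c * x ^ (a - 1)) := by
          rw [← ofReal_integral_eq_lintegral_ofReal hint ?_, hval]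
          · filter_upwards [ae_restrict_mem measurableSet_Ioc] with x hx
            have := hx.1; positivity
      _ ≤ ∫⁻ x in Ioc 0 t, gammaPDF a r x := by
          refine setLIntegral_mono (measurable_gammaPDFReal a r).ennreal_ofReal fun x hx => ?_
          rw [gammaPDF_of_nonneg hx.1.le]
          apply ENNReal.ofReal_le_ofReal
          rw [hc]
          have h2 : Real.exp (-r) ≤ Real.exp (-(r * x)) := by
            apply Real.exp_le_exp.2
            nlinarith [hx.2.trans ht1, hx.1]
          have h3 : 0 < x ^ (a - 1) := Real.rpow_pos_of_pos hx.1 _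
          have h4 : 0 < r ^ a / Real.Gamma a := by
            have := Real.Gamma_pos_of_pos ha; positivity
          calc r ^ a / Real.Gamma a * Real.exp (-r) * x ^ (a-1)
              ≤ r ^ a / Real.Gamma a * Real.exp (-(r*x)) * x ^ (a-1) := by gcongr
            _ = r ^ a / Real.Gamma a * x ^ (a-1) * Real.exp (-(r*x)) := by ring
      _ ≤ ∫⁻ x in Icc 0 t, gammaPDF a r x := lintegral_mono_set Ioc_subset_Icc_self
  have h2 : (ENNReal.ofReal (c * (t ^ a / a))).toReal ≤ (gammaMeasure a r (Icc 0 t)).toReal :=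
    ENNReal.toReal_mono (measure_ne_top _ _) h1
  rw [ENNReal.toReal_ofReal (by positivity)] at h2
  calc c / a * t ^ a = c * (t ^ a / a) := by ring
    _ ≤ _ := h2

end UncodedAux

set_option maxHeartbeats 1000000 in
/-- distortion exponent of uncoded transmission for Nakagami fading
channel and side information: `Δ_u = min{L_s + L_c, 1}`. -/
theorem uncoded_exponent
    (Lc Ls : ℝ) (hLc : 0 < Lc) (hLs : 0 < Ls) :
    Tendsto (fun ρ : ℝ =>
        -(Real.log (∫ p : ℝ × ℝ, (1 + ρ * p.1 + ρ * p.2)⁻¹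
            ∂((gammaMeasure Lc Lc).prod (gammaMeasure Ls Ls))) / Real.log ρ))
      atTop (nhds (min (Ls + Lc) 1)) := by
  classical
  haveI hpc : IsProbabilityMeasure (gammaMeasure Lc Lc) := isProbabilityMeasure_gammaMeasure hLc hLc
  haveI hps : IsProbabilityMeasure (gammaMeasure Ls Ls) := isProbabilityMeasure_gammaMeasure hLs hLs
  set μc := gammaMeasure Lc Lc with hμc
  set μs := gammaMeasure Ls Ls with hμs
  set ν := μc.prod μs with hν
  set L' := min (Ls + Lc) 1 with hL'
  have hL'pos : 0 < L' := lt_min (by linarith) one_pos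
  have hL'le1 : L' ≤ 1 := min_le_right _ _
  have hL'leL : L' ≤ Ls + Lc := min_le_left _ _
  set E : ℝ → ℝ := fun ρ => ∫ p : ℝ × ℝ, (1 + ρ * p.1 + ρ * p.2)⁻¹ ∂ν with hE
  -- a.e. positivity of coordinates
  have hae : ∀ᵐ p : ℝ × ℝ ∂ν, 0 < p.1 ∧ 0 < p.2 := by
    rw [ae_iff]
    have hnull1 : ν ((Set.Iic 0 ×ˢ Set.univ : Set (ℝ × ℝ))) = 0 := by
      rw [hν, Measure.prod_prod, gammaMeasure_Iic_zero, zero_mul]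
    have hnull2 : ν ((Set.univ ×ˢ Set.Iic 0 : Set (ℝ × ℝ))) = 0 := by
      rw [hν, Measure.prod_prod, gammaMeasure_Iic_zero, mul_zero]
    refine measure_mono_null (fun p hp => ?_) (measure_union_null hnull1 hnull2)
    simp only [Set.mem_setOf_eq, not_and_or, not_lt] at hp
    rcases hp with h | h
    · exact Or.inl ⟨h, Set.mem_univ _⟩
    · exact Or.inr ⟨Set.mem_univ _, h⟩
  have hfmeas : ∀ ρ : ℝ, AEStronglyMeasurable
      (fun p : ℝ × ℝ => (1 + ρ * p.1 + ρ * p.2)⁻¹) ν :=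
    fun ρ => (((measurable_const.add (measurable_fst.const_mul ρ)).add
      (measurable_snd.const_mul ρ)).inv).aestronglyMeasurable
  have hfnn : ∀ ρ : ℝ, 0 < ρ →
      0 ≤ᵐ[ν] fun p : ℝ × ℝ => (1 + ρ * p.1 + ρ * p.2)⁻¹ := by
    intro ρ hρ
    filter_upwards [hae] with p hp
    have h1 := hp.1; have h2 := hp.2
    positivity
  have hfint : ∀ ρ : ℝ, 0 < ρ →
      Integrable (fun p : ℝ × ℝ => (1 + ρ * p.1 + ρ * p.2)⁻¹) ν := by
    intro ρ hρ
    refine Integrable.mono' (integrable_const 1) (hfmeas ρ) ?_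
    filter_upwards [hae] with p hp
    have h1 := hp.1; have h2 := hp.2
    rw [Real.norm_eq_abs, abs_of_pos (by positivity)]
    exact inv_le_one_of_one_le₀ (by nlinarith)
  -- constants for the lower bound
  set Cc : ℝ := Lc ^ Lc / Real.Gamma Lc * Real.exp (-Lc) / Lc with hCc
  set Cs : ℝ := Ls ^ Ls / Real.Gamma Ls * Real.exp (-Ls) / Ls with hCs
  have hCcpos : 0 < Cc := by
    have := Real.Gamma_pos_of_pos hLc; rw [hCc]; positivity
  have hCspos : 0 < Cs := by
    have := Real.Gamma_pos_of_pos hLs; rw [hCs]; positivity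
  -- lower bound on E
  have hlow : ∀ ρ : ℝ, 1 ≤ ρ → Cc * Cs / 3 * ρ ^ (-L') ≤ E ρ := by
    intro ρ hρ
    have hρ0 : 0 < ρ := lt_of_lt_of_le one_pos hρ
    -- choose the box size
    rcases le_total (Ls + Lc) 1 with hcase | hcase
    · -- L' = Ls + Lc, box of size 1/ρ
      have hmin : L' = Ls + Lc := min_eq_left hcase
      set t : ℝ := ρ⁻¹ with ht
      have ht0 : 0 < t := by positivity
      have ht1 : t ≤ 1 := by
        rw [ht]; exact inv_le_one_of_one_le₀ hρ
      set A : Set (ℝ × ℝ) := Set.Icc 0 t ×ˢ Set.Icc 0 t with hA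
      have hb1 : Cc * t ^ Lc ≤ (μc (Set.Icc 0 t)).toReal := by
        have := gammaMeasure_Icc_ge' hLc hLc ht0 ht1
        calc Cc * t ^ Lc = Lc ^ Lc / Real.Gamma Lc * Real.exp (-Lc) / Lc * t ^ Lc := by
              rw [hCc]
          _ ≤ _ := this
      have hb2 : Cs * t ^ Ls ≤ (μs (Set.Icc 0 t)).toReal := by
        have := gammaMeasure_Icc_ge' hLs hLs ht0 ht1
        calc Cs * t ^ Ls = Ls ^ Ls / Real.Gamma Ls * Real.exp (-Ls) / Ls * t ^ Ls := by
              rw [hCs]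
          _ ≤ _ := this
      have ht_pow : t ^ Lc * t ^ Ls = ρ ^ (-L') := by
        rw [ht, Real.inv_rpow hρ0.le, Real.inv_rpow hρ0.le, ← Real.rpow_neg hρ0.le,
          ← Real.rpow_neg hρ0.le, ← Real.rpow_add hρ0, hmin]
        congr 1; ring
      have hstep1 : (3:ℝ)⁻¹ * (ν A).toReal ≤ ∫ p in A, (1 + ρ * p.1 + ρ * p.2)⁻¹ ∂ν := by
        refine setIntegral_ge_of_const_le_real (measurableSet_Icc.prod measurableSet_Icc)
          (measure_ne_top _ _) (fun p hp => ?_) ((hfint ρ hρ0).integrableOn)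
        have hp1 : 0 ≤ p.1 := hp.1.1
        have hp2 : 0 ≤ p.2 := hp.2.1
        have hub1 : ρ * p.1 ≤ 1 := by
          calc ρ * p.1 ≤ ρ * t := by gcongr; exact hp.1.2
            _ = 1 := by rw [ht]; field_simp
        have hub2 : ρ * p.2 ≤ 1 := by
          calc ρ * p.2 ≤ ρ * t := by gcongr; exact hp.2.2
            _ = 1 := by rw [ht]; field_simp
        have hpos : 0 < 1 + ρ * p.1 + ρ * p.2 := by positivity
        exact inv_anti₀ hpos (by linarith)
      have hstep2 : ∫ p in A, (1 + ρ * p.1 + ρ * p.2)⁻¹ ∂ν ≤ E ρ :=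
        setIntegral_le_integral (hfint ρ hρ0) (hfnn ρ hρ0)
      have hmeasA : (ν A).toReal = (μc (Set.Icc 0 t)).toReal * (μs (Set.Icc 0 t)).toReal := by
        rw [hA, hν, Measure.prod_prod, ENNReal.toReal_mul]
      calc Cc * Cs / 3 * ρ ^ (-L')
          = (3:ℝ)⁻¹ * ((Cc * t ^ Lc) * (Cs * t ^ Ls)) := by rw [← ht_pow]; ring
        _ ≤ (3:ℝ)⁻¹ * ((μc (Set.Icc 0 t)).toReal * (μs (Set.Icc 0 t)).toReal) := by
            have h1 : (0:ℝ) ≤ Cc * t ^ Lc := by positivity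
            have h2 : (0:ℝ) ≤ Cs * t ^ Ls := by positivity
            have := mul_le_mul hb1 hb2 h2 ENNReal.toReal_nonneg
            nlinarith
        _ = (3:ℝ)⁻¹ * (ν A).toReal := by rw [hmeasA]
        _ ≤ ∫ p in A, (1 + ρ * p.1 + ρ * p.2)⁻¹ ∂ν := hstep1
        _ ≤ E ρ := hstep2
    · -- L' = 1, box of size 1
      have hmin : L' = 1 := min_eq_right hcase
      set A : Set (ℝ × ℝ) := Set.Icc (0:ℝ) 1 ×ˢ Set.Icc (0:ℝ) 1 with hA
      have hb1 : Cc * 1 ≤ (μc (Set.Icc 0 1)).toReal := by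
        have := gammaMeasure_Icc_ge' hLc hLc one_pos le_rfl
        calc Cc * 1 = Lc ^ Lc / Real.Gamma Lc * Real.exp (-Lc) / Lc * (1:ℝ) ^ Lc := by
              rw [hCc, Real.one_rpow]
          _ ≤ _ := this
      have hb2 : Cs * 1 ≤ (μs (Set.Icc 0 1)).toReal := by
        have := gammaMeasure_Icc_ge' hLs hLs one_pos le_rfl
        calc Cs * 1 = Ls ^ Ls / Real.Gamma Ls * Real.exp (-Ls) / Ls * (1:ℝ) ^ Ls := by
              rw [hCs, Real.one_rpow]
          _ ≤ _ := this
      have hstep1 : (3 * ρ)⁻¹ * (ν A).toReal ≤ ∫ p in A, (1 + ρ * p.1 + ρ * p.2)⁻¹ ∂ν := by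
        refine setIntegral_ge_of_const_le_real (measurableSet_Icc.prod measurableSet_Icc)
          (measure_ne_top _ _) (fun p hp => ?_) ((hfint ρ hρ0).integrableOn)
        have hp1 : 0 ≤ p.1 := hp.1.1
        have hp2 : 0 ≤ p.2 := hp.2.1
        have hub1 : ρ * p.1 ≤ ρ := by nlinarith [hp.1.2]
        have hub2 : ρ * p.2 ≤ ρ := by nlinarith [hp.2.2]
        have hpos : 0 < 1 + ρ * p.1 + ρ * p.2 := by positivity
        exact inv_anti₀ hpos (by linarith)
      have hstep2 : ∫ p in A, (1 + ρ * p.1 + ρ * p.2)⁻¹ ∂ν ≤ E ρ :=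
        setIntegral_le_integral (hfint ρ hρ0) (hfnn ρ hρ0)
      have hmeasA : (ν A).toReal = (μc (Set.Icc 0 1)).toReal * (μs (Set.Icc 0 1)).toReal := by
        rw [hA, hν, Measure.prod_prod, ENNReal.toReal_mul]
      have hrw : ρ ^ (-L') = ρ⁻¹ := by rw [hmin, Real.rpow_neg_one]
      calc Cc * Cs / 3 * ρ ^ (-L')
          = (3 * ρ)⁻¹ * ((Cc * 1) * (Cs * 1)) := by
            rw [hrw, mul_inv]; ring
        _ ≤ (3 * ρ)⁻¹ * ((μc (Set.Icc 0 1)).toReal * (μs (Set.Icc 0 1)).toReal) := by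
            have h1 : (0:ℝ) ≤ Cc * 1 := by positivity
            have h2 : (0:ℝ) ≤ Cs * 1 := by positivity
            have h3 : (0:ℝ) ≤ (3 * ρ)⁻¹ := by positivity
            have := mul_le_mul hb1 hb2 h2 ENNReal.toReal_nonneg
            nlinarith
        _ = (3 * ρ)⁻¹ * (ν A).toReal := by rw [hmeasA]
        _ ≤ ∫ p in A, (1 + ρ * p.1 + ρ * p.2)⁻¹ ∂ν := hstep1
        _ ≤ E ρ := hstep2
  set c : ℝ := Cc * Cs / 3 with hc
  have hcpos : 0 < c := by positivity
  have hEpos : ∀ ρ : ℝ, 1 ≤ ρ → 0 < E ρ := by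
    intro ρ hρ
    have hρ0 : 0 < ρ := lt_of_lt_of_le one_pos hρ
    have := hlow ρ hρ
    have h0 : 0 < c * ρ ^ (-L') := by
      have := Real.rpow_pos_of_pos hρ0 (-L'); positivity
    linarith
  -- main tendsto argument
  rw [Metric.tendsto_atTop]
  intro ε hε
  set δ : ℝ := min (ε/4) (L'/2) with hδ
  have hδpos : 0 < δ := lt_min (by linarith) (by linarith)
  have hδε : δ ≤ ε/4 := min_le_left _ _
  have hδL : δ ≤ L'/2 := min_le_right _ _
  set a : ℝ := L' - δ with ha
  have ha0 : 0 < a := by rw [ha]; linarith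
  have ha1 : a ≤ 1 := by rw [ha]; linarith
  have haL : a < Ls + Lc := by rw [ha]; linarith
  set a1 : ℝ := a * Lc / (Ls + Lc) with ha1d
  set a2 : ℝ := a * Ls / (Ls + Lc) with ha2d
  have hS : 0 < Ls + Lc := by linarith
  have ha1lt : a1 < Lc := by
    rw [ha1d, div_lt_iff₀ hS, mul_comm Lc]
    exact mul_lt_mul_of_pos_right haL hLc
  have ha2lt : a2 < Ls := by
    rw [ha2d, div_lt_iff₀ hS, mul_comm Ls]
    exact mul_lt_mul_of_pos_right haL hLs
  have ha12 : a1 + a2 = a := by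
    rw [ha1d, ha2d]; field_simp; ring
  have ha1nn : 0 ≤ a1 := by rw [ha1d]; positivity
  have ha2nn : 0 ≤ a2 := by rw [ha2d]; positivity
  -- the moment function
  have hMint : Integrable (fun p : ℝ × ℝ => p.1 ^ (-a1) * p.2 ^ (-a2)) ν :=
    (integrable_neg_rpow_gamma hLc hLc ha1lt).mul_prod
      (integrable_neg_rpow_gamma hLs hLs ha2lt)
  set M : ℝ := ∫ p : ℝ × ℝ, p.1 ^ (-a1) * p.2 ^ (-a2) ∂ν with hM
  -- upper bound
  have hup : ∀ ρ : ℝ, 1 ≤ ρ → E ρ ≤ ρ ^ (-a) * M := by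
    intro ρ hρ
    have hρ0 : 0 < ρ := lt_of_lt_of_le one_pos hρ
    have hptw : (fun p : ℝ × ℝ => (1 + ρ * p.1 + ρ * p.2)⁻¹)
        ≤ᵐ[ν] fun p => ρ ^ (-a) * (p.1 ^ (-a1) * p.2 ^ (-a2)) := by
      filter_upwards [hae] with p hp
      have h1 := hp.1; have h2 := hp.2
      have hxpos : 0 < ρ * (p.1 + p.2) := by positivity
      have key1 : (1 + ρ * p.1 + ρ * p.2)⁻¹ ≤ (ρ * (p.1 + p.2)) ^ (-a) := by
        rcases le_total (ρ * (p.1 + p.2)) 1 with hle | hge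
        · have e1 : (1 + ρ * p.1 + ρ * p.2)⁻¹ ≤ 1 := inv_le_one_of_one_le₀ (by nlinarith)
          have e2 : (1:ℝ) ≤ (ρ * (p.1 + p.2)) ^ (-a) := by
            have := Real.rpow_le_rpow_of_exponent_ge hxpos hle
              (by linarith : -a ≤ 0)
            rwa [Real.rpow_zero] at this
          linarith
        · have e1 : (1 + ρ * p.1 + ρ * p.2)⁻¹ ≤ (ρ * (p.1 + p.2))⁻¹ := by
            apply inv_anti₀ hxpos
            nlinarith
          have e2 : (ρ * (p.1 + p.2))⁻¹ ≤ (ρ * (p.1 + p.2)) ^ (-a) := by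
            rw [← Real.rpow_neg_one]
            exact Real.rpow_le_rpow_of_exponent_le hge (by linarith)
          linarith
      have key2 : (ρ * (p.1 + p.2)) ^ (-a) = ρ ^ (-a) * (p.1 + p.2) ^ (-a) :=
        Real.mul_rpow hρ0.le (by positivity)
      have key3 : (p.1 + p.2) ^ (-a) = (p.1 + p.2) ^ (-a1) * (p.1 + p.2) ^ (-a2) := by
        rw [← Real.rpow_add (by positivity)]
        congr 1; rw [← ha12]; ring
      have key4 : (p.1 + p.2) ^ (-a1) ≤ p.1 ^ (-a1) :=
        Real.rpow_le_rpow_of_nonpos h1 (by linarith) (by linarith)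
      have key5 : (p.1 + p.2) ^ (-a2) ≤ p.2 ^ (-a2) :=
        Real.rpow_le_rpow_of_nonpos h2 (by linarith) (by linarith)
      have hρa : (0:ℝ) ≤ ρ ^ (-a) := (Real.rpow_pos_of_pos hρ0 _).le
      have hnn1 : (0:ℝ) ≤ (p.1 + p.2) ^ (-a1) := (Real.rpow_pos_of_pos (by positivity) _).le
      have hnn2 : (0:ℝ) ≤ p.2 ^ (-a2) := (Real.rpow_pos_of_pos h2 _).le
      calc (1 + ρ * p.1 + ρ * p.2)⁻¹ ≤ (ρ * (p.1 + p.2)) ^ (-a) := key1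
        _ = ρ ^ (-a) * ((p.1 + p.2) ^ (-a1) * (p.1 + p.2) ^ (-a2)) := by
            rw [key2, key3]
        _ ≤ ρ ^ (-a) * (p.1 ^ (-a1) * p.2 ^ (-a2)) := by
            apply mul_le_mul_of_nonneg_left _ hρa
            exact mul_le_mul key4 key5 (Real.rpow_pos_of_pos (by positivity) _).le
              (Real.rpow_pos_of_pos h1 _).le
    calc E ρ ≤ ∫ p : ℝ × ℝ, ρ ^ (-a) * (p.1 ^ (-a1) * p.2 ^ (-a2)) ∂ν :=
          integral_mono_ae (hfint ρ hρ0) (hMint.const_mul _) hptw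
      _ = ρ ^ (-a) * M := by rw [integral_const_mul]
  have hMpos : 0 < M := by
    have h1 := hlow 1 le_rfl
    have h2 := hup 1 le_rfl
    rw [Real.one_rpow] at h1 h2
    have := Real.rpow_pos_of_pos one_pos (-L')
    nlinarith [hEpos 1 le_rfl]
  -- choose N
  set N : ℝ := max 2 (Real.exp ((|Real.log M| + |Real.log c| + 1)/δ)) with hN
  refine ⟨N, fun ρ hρ => ?_⟩
  have hρ2 : (2:ℝ) ≤ ρ := le_trans (le_max_left _ _) hρ
  have hρ1 : (1:ℝ) ≤ ρ := by linarith
  have hρ0 : (0:ℝ) < ρ := by linarith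
  set T : ℝ := Real.log ρ with hT
  have hTpos : 0 < T := Real.log_pos (by linarith)
  have hTbig : (|Real.log M| + |Real.log c| + 1)/δ ≤ T := by
    rw [hT]
    calc (|Real.log M| + |Real.log c| + 1)/δ
        = Real.log (Real.exp ((|Real.log M| + |Real.log c| + 1)/δ)) := (Real.log_exp _).symm
      _ ≤ Real.log ρ := by
          apply (Real.log_le_log_iff (Real.exp_pos _) hρ0).2
          exact le_trans (le_max_right _ _) hρ
  have hsum : |Real.log M| + |Real.log c| + 1 ≤ δ * T :=
    (div_le_iff₀' hδpos).1 hTbig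
  have hcT : |Real.log c| ≤ δ * T := by
    have := abs_nonneg (Real.log M)
    linarith
  have hMT : |Real.log M| ≤ δ * T := by
    have := abs_nonneg (Real.log c)
    linarith
  set G : ℝ := Real.log (E ρ) with hG
  have hEρpos : 0 < E ρ := hEpos ρ hρ1
  have h1 : Real.log c + (-L') * T ≤ G := by
    have hlb := hlow ρ hρ1
    have hlhs : 0 < c * ρ ^ (-L') := by
      have := Real.rpow_pos_of_pos hρ0 (-L'); positivity
    have := (Real.log_le_log_iff hlhs hEρpos).2 hlb
    rwa [Real.log_mul hcpos.ne' (Real.rpow_pos_of_pos hρ0 _).ne',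
      Real.log_rpow hρ0] at this
  have h2 : G ≤ (-a) * T + Real.log M := by
    have hub := hup ρ hρ1
    have hrhs : 0 < ρ ^ (-a) * M := by
      have := Real.rpow_pos_of_pos hρ0 (-a); positivity
    have := (Real.log_le_log_iff hEρpos hrhs).2 hub
    rwa [Real.log_mul (Real.rpow_pos_of_pos hρ0 _).ne' hMpos.ne',
      Real.log_rpow hρ0] at this
  have h2' : G ≤ -(L' * T) + δ * T + Real.log M := by
    calc G ≤ (-a) * T + Real.log M := h2
      _ = -(L' * T) + δ * T + Real.log M := by rw [ha]; ring
  -- conclude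
  rw [Real.dist_eq]
  have habs : |(-(G / T)) - L'| ≤ 2 * δ := by
    rw [abs_le]
    constructor
    · have hG' : G ≤ -(L' * T) + 2 * (δ * T) := by
        have := abs_le.1 hMT
        linarith
      have : G / T ≤ -L' + 2 * δ := by
        rw [div_le_iff₀ hTpos]
        calc G ≤ -(L' * T) + 2 * (δ * T) := hG'
          _ = (-L' + 2 * δ) * T := by ring
      linarith
    · have hG' : -(L' * T) - δ * T ≤ G := by
        have := abs_le.1 hcT
        linarith
      have : -L' - δ ≤ G / T := by
        rw [le_div_iff₀ hTpos]
        calc (-L' - δ) * T = -(L' * T) - δ * T := by ring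
          _ ≤ G := hG'
      linarith
  calc |(-(Real.log (E ρ) / Real.log ρ)) - L'| = |(-(G / T)) - L'| := by rw [hG, hT]
    _ ≤ 2 * δ := habs
    _ < ε := by linarith
end

section
/- Let L_c, L_s > 0 and write (x)^+ = max{x,0}. For r ∈ ℝ define Δ_{h1}(r) = inf{ (1−β)^+ + L_c·α + L_s·β : α, β ≥ 0 and (1−β)^+ − (α−1)^+ ≤ r } and Δ_{h2}(r) = inf{ max((1−β)^+, (1−α)^+ + r) + L_c·α + L_s·β : α, β ≥ 0 and (1−β)^+ − (α−1)^+ > r }, with the convention that the infimum over an empty set is +∞. Then sup_{r∈ℝ} min{Δ_{h1}(r), Δ_{h2}(r)} equals min{1, L_s + L_c} if L_s ≤ 1, and 1 + min{1, L_c}·(L_s − 1)/(L_s − 1 + min{1, L_c}) if L_s > 1. -/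
private lemma hda_ereal_le_of_forall_sub_lt {c : ℝ} {x : EReal}
    (h : ∀ ε : ℝ, 0 < ε → ((c - ε : ℝ) : EReal) ≤ x) : (c : EReal) ≤ x := by
  by_contra hc
  push_neg at hc
  obtain ⟨z, hz1, hz2⟩ := EReal.exists_between_coe_real hc
  have hzc : z < c := by exact_mod_cast hz2
  have := h (c - z) (by linarith)
  have hzz : ((c - (c - z) : ℝ) : EReal) = (z : EReal) := by norm_num
  rw [hzz] at this
  exact absurd this (not_le.2 hz1)

private lemma hda_max_ge_onebeta {β : ℝ} (hβ : 0 ≤ β) :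
    1 - max (1 - β) 0 ≤ β ∧ 0 ≤ max (1 - β) 0 ∧ max (1 - β) 0 ≤ 1 := by
  refine ⟨?_, le_max_right _ _, max_le (by linarith) (by linarith)⟩
  rcases le_total (1 - β) 0 with h | h
  · rw [max_eq_right h]; linarith
  · rw [max_eq_left h]; linarith

/-- Outage-set lower bound at `r`, case `Ls > 1`. -/
private lemma hda_lemA (Lc Ls m r α β : ℝ) (hLc : 0 < Lc) (hLs : 1 < Ls)
    (hm0 : 0 ≤ m) (hmLc : m ≤ Lc) (hr0 : 0 ≤ r) (hr1 : r ≤ 1)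
    (hid : m * r = (Ls - 1) * (1 - r))
    (hα : 0 ≤ α) (hβ : 0 ≤ β)
    (hc : max (1 - β) 0 - max (α - 1) 0 ≤ r) :
    1 + m * r ≤ max (1 - β) 0 + Lc * α + Ls * β := by
  obtain ⟨hβb, hb0, hb1⟩ := hda_max_ge_onebeta hβ
  set b := max (1 - β) 0 with hb
  rcases le_or_gt b r with h | h
  · nlinarith [mul_nonneg (sub_nonneg.2 h) (by linarith : (0:ℝ) ≤ Ls - 1),
      mul_nonneg hLc.le hα, mul_nonneg hb0 (by linarith : (0:ℝ) ≤ Ls - 1)]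
  · have ha : b - r ≤ max (α - 1) 0 := by linarith
    have hα1 : 1 + (b - r) ≤ α := by
      rcases le_total (α - 1) 0 with h2 | h2
      · rw [max_eq_right h2] at ha; linarith
      · rw [max_eq_left h2] at ha; linarith
    rcases le_total (1 + Lc - Ls) 0 with hs | hs
    · nlinarith [mul_nonneg (sub_nonneg.2 hb1) (by linarith : (0:ℝ) ≤ -(1+Lc-Ls)),
        mul_nonneg hLc.le (by linarith : (0:ℝ) ≤ 1 - r)]
    · nlinarith [mul_nonneg (sub_nonneg.2 h.le) hs]

/-- Non-outage lower bound (no constraint needed), case `Ls > 1`. -/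
private lemma hda_lemB (Lc Ls m r α β : ℝ) (hLc : 0 < Lc) (hLs : 1 < Ls)
    (hm0 : 0 ≤ m) (hm1 : m ≤ 1) (hmLc : m ≤ Lc) (hr1 : r ≤ 1)
    (hα : 0 ≤ α) (hβ : 0 ≤ β) :
    1 + m * r ≤ max (max (1 - β) 0) (max (1 - α) 0 + r) + Lc * α + Ls * β := by
  obtain ⟨hβb, hb0, hb1⟩ := hda_max_ge_onebeta hβ
  set b := max (1 - β) 0 with hb
  set M := max b (max (1 - α) 0 + r) with hM
  have hM1 : b ≤ M := le_max_left _ _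
  rcases le_total 1 α with h1 | h1
  · nlinarith [mul_nonneg (by linarith : (0:ℝ) ≤ 1 - b) (by linarith : (0:ℝ) ≤ Ls - 1),
      mul_nonneg hm0 (by linarith : (0:ℝ) ≤ 1 - r),
      mul_nonneg hLc.le (by linarith : (0:ℝ) ≤ α - 1)]
  · have hM2 : 1 - α + r ≤ M := by
      have h2 : max (1 - α) 0 = 1 - α := max_eq_left (by linarith)
      rw [hM, h2]; exact le_max_right _ _
    nlinarith [mul_nonneg (by linarith : (0:ℝ) ≤ 1 - m) (sub_nonneg.2 hM1),
      mul_nonneg hm0 (sub_nonneg.2 hM2),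
      mul_nonneg (by linarith : (0:ℝ) ≤ Lc - m) hα,
      mul_nonneg (by linarith : (0:ℝ) ≤ 1 - b) (by linarith : (0:ℝ) ≤ Ls + m - 1)]

/-- Outage-set lower bound for `r < 0`, case `Ls ≤ 1`. -/
private lemma hda_lemC (Lc Ls r α β : ℝ) (hLc : 0 < Lc) (hLs : 0 < Ls) (hLs1 : Ls ≤ 1)
    (hr : r < 0) (hα : 0 ≤ α) (hβ : 0 ≤ β)
    (hc : max (1 - β) 0 - max (α - 1) 0 ≤ r) :
    Ls + Lc ≤ max (1 - β) 0 + Lc * α + Ls * β := by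
  obtain ⟨hβb, hb0, hb1⟩ := hda_max_ge_onebeta hβ
  set b := max (1 - β) 0 with hb
  have ha : 0 < max (α - 1) 0 := by linarith
  have hα1 : 1 ≤ α := by
    rcases le_total (α - 1) 0 with h2 | h2
    · rw [max_eq_right h2] at ha; linarith
    · linarith
  nlinarith [mul_nonneg hb0 (by linarith : (0:ℝ) ≤ 1 - Ls),
    mul_nonneg hLc.le (by linarith : (0:ℝ) ≤ α - 1)]

/-- Non-outage lower bound (no constraint needed), case `Ls ≤ 1`, `r ≤ 0`. -/
private lemma hda_lemD (Lc Ls r α β : ℝ) (hLc : 0 < Lc) (hLs : 0 < Ls) (hLs1 : Ls ≤ 1)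
    (hr : r ≤ 0) (hα : 0 ≤ α) (hβ : 0 ≤ β) :
    min 1 (Ls + Lc) + r ≤ max (max (1 - β) 0) (max (1 - α) 0 + r) + Lc * α + Ls * β := by
  set m := min 1 Lc with hm
  have hm0 : 0 < m := lt_min one_pos hLc
  have hm1 : m ≤ 1 := min_le_left _ _
  have hmLc : m ≤ Lc := min_le_right _ _
  obtain ⟨hβb, hb0, hb1⟩ := hda_max_ge_onebeta hβ
  set b := max (1 - β) 0 with hb
  have hmin1 : min 1 (Ls + Lc) ≤ 1 := min_le_left _ _
  have hmin2 : min 1 (Ls + Lc) ≤ Ls + Lc := min_le_right _ _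
  set M := max b (max (1 - α) 0 + r) with hM
  have hM1 : b ≤ M := le_max_left _ _
  rcases le_total 1 α with h1 | h1
  · nlinarith [mul_nonneg hb0 (by linarith : (0:ℝ) ≤ 1 - Ls),
      mul_nonneg hLc.le (by linarith : (0:ℝ) ≤ α - 1)]
  · have hM2 : 1 - α + r ≤ M := by
      have h2 : max (1 - α) 0 = 1 - α := max_eq_left (by linarith)
      rw [hM, h2]; exact le_max_right _ _
    have key : m + Ls + m * r + min 0 (1 - m - Ls) ≤ M + Lc * α + Ls * β := by
      rcases le_total (1 - m - Ls) 0 with hs | hs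
      · rw [min_eq_right hs]
        nlinarith [mul_nonneg (by linarith : (0:ℝ) ≤ 1 - m) (sub_nonneg.2 hM1),
          mul_nonneg hm0.le (sub_nonneg.2 hM2),
          mul_nonneg (by linarith : (0:ℝ) ≤ Lc - m) hα,
          mul_nonneg (by linarith : (0:ℝ) ≤ 1 - b) (by linarith : (0:ℝ) ≤ Ls + m - 1)]
      · rw [min_eq_left hs]
        nlinarith [mul_nonneg (by linarith : (0:ℝ) ≤ 1 - m) (sub_nonneg.2 hM1),
          mul_nonneg hm0.le (sub_nonneg.2 hM2),
          mul_nonneg (by linarith : (0:ℝ) ≤ Lc - m) hα,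
          mul_nonneg hb0 (by linarith : (0:ℝ) ≤ 1 - m - Ls)]
    rcases le_total Lc 1 with hc1 | hc1
    · have hmeq : m = Lc := min_eq_right hc1
      rcases le_total (1 - m - Ls) 0 with hs | hs
      · rw [min_eq_right hs] at key
        nlinarith [mul_nonneg (by linarith : (0:ℝ) ≤ 1 - m) (by linarith : (0:ℝ) ≤ -r)]
      · rw [min_eq_left hs] at key
        nlinarith [mul_nonneg (by linarith : (0:ℝ) ≤ 1 - m) (by linarith : (0:ℝ) ≤ -r)]
    · have hmeq : m = 1 := min_eq_left hc1
      rcases le_total (1 - m - Ls) 0 with hs | hs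
      · rw [min_eq_right hs] at key; nlinarith
      · rw [min_eq_left hs] at key; nlinarith

/-- the finite-dimensional optimization of Appendix D giving the HDA
distortion exponent: `sup_{r∈ℝ} min{Δ_{h1}(r), Δ_{h2}(r)}` with infima over empty sets
equal to `+∞` (taken in `EReal`). -/
theorem hda_exponent_optimization
    (Lc Ls : ℝ) (hLc : 0 < Lc) (hLs : 0 < Ls) :
    (⨆ r : ℝ, min
        (sInf {x : EReal | ∃ α β : ℝ, 0 ≤ α ∧ 0 ≤ β ∧
            max (1 - β) 0 - max (α - 1) 0 ≤ r ∧
            x = ((max (1 - β) 0 + Lc * α + Ls * β : ℝ) : EReal)})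
        (sInf {x : EReal | ∃ α β : ℝ, 0 ≤ α ∧ 0 ≤ β ∧
            r < max (1 - β) 0 - max (α - 1) 0 ∧
            x = ((max (max (1 - β) 0) (max (1 - α) 0 + r) + Lc * α + Ls * β : ℝ) : EReal)}))
      = ((if Ls ≤ 1 then min 1 (Ls + Lc)
          else 1 + min 1 Lc * (Ls - 1) / (Ls - 1 + min 1 Lc) : ℝ) : EReal) := by
  have hm0 : 0 < min 1 Lc := lt_min one_pos hLc
  have hm1 : min 1 Lc ≤ 1 := min_le_left _ _
  have hmLc : min 1 Lc ≤ Lc := min_le_right _ _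
  by_cases hLs1 : Ls ≤ 1
  · rw [if_pos hLs1]
    apply le_antisymm
    · -- upper bound
      apply iSup_le
      intro r
      rcases le_or_gt 0 r with hr | hr
      · refine le_trans (min_le_left _ _) (le_trans (sInf_le ⟨0, 1, le_rfl, zero_le_one, ?_, rfl⟩) ?_)
        · norm_num; linarith
        · rw [EReal.coe_le_coe_iff]
          have : max (1 - (1:ℝ)) 0 = 0 := by norm_num
          rw [this]
          exact le_min (by linarith) (by linarith)
      · rcases le_total (Ls + Lc) 1 with hsum | hsum
        · -- D* = Ls + Lc; witness α = max (1+r) 0, β = 1 in set 2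
          refine le_trans (min_le_right _ _)
            (le_trans (sInf_le ⟨max (1+r) 0, 1, le_max_right _ _, zero_le_one, ?_, rfl⟩) ?_)
          · have h1 : max ((1:ℝ) - 1) 0 = 0 := by norm_num
            have h2 : max (max (1+r) 0 - 1) 0 = 0 :=
              max_eq_right (by simp only [sub_nonpos]; exact max_le (by linarith) (by linarith))
            rw [h1, h2]; linarith
          · rw [EReal.coe_le_coe_iff]
            have h1 : max ((1:ℝ) - 1) 0 = 0 := by norm_num
            have h3 : max (1 - max (1+r) 0) 0 + r ≤ 0 := by
              rcases le_total (1+r) 0 with h | h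
              · rw [max_eq_right h]; norm_num; linarith
              · rw [max_eq_left h]
                have : max (1 - (1+r)) 0 = -r := by rw [max_eq_left (by linarith)]; ring
                rw [this]; linarith
            have h4 : max (max ((1:ℝ)-1) 0) (max (1 - max (1+r) 0) 0 + r) = 0 := by
              rw [h1]; exact max_eq_left (by linarith)
            rw [h4]
            have h5 : Lc * max (1+r) 0 ≤ Lc := by
              have : max (1+r) 0 ≤ 1 := max_le (by linarith) (by linarith)
              nlinarith
            exact le_min (by linarith) (by linarith)
        · -- D* = 1; witness α = 0, β = 0 in set 2
          refine le_trans (min_le_right _ _)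
            (le_trans (sInf_le ⟨0, 0, le_rfl, le_rfl, ?_, rfl⟩) ?_)
          · have h1 : max ((1:ℝ) - 0) 0 = 1 := by norm_num
            have h2 : max ((0:ℝ) - 1) 0 = 0 := by norm_num
            rw [h1, h2]; linarith
          · rw [EReal.coe_le_coe_iff]
            have h1 : max ((1:ℝ) - 0) 0 = 1 := by norm_num
            rw [h1]
            have h4 : max (1:ℝ) (1 + r) = 1 := max_eq_left (by linarith)
            rw [h4]
            exact le_min (by norm_num) (by norm_num; linarith)
    · -- lower bound via r = -ε
      apply hda_ereal_le_of_forall_sub_lt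
      intro ε hε
      refine le_trans (le_min ?_ ?_) (le_iSup (fun r => min _ _) (-ε))
      · apply le_sInf
        rintro x ⟨α, β, hα, hβ, hcon, rfl⟩
        rw [EReal.coe_le_coe_iff]
        have := hda_lemC Lc Ls (-ε) α β hLc hLs hLs1 (by linarith) hα hβ hcon
        have h2 : min 1 (Ls + Lc) ≤ Ls + Lc := min_le_right _ _
        linarith
      · apply le_sInf
        rintro x ⟨α, β, hα, hβ, hcon, rfl⟩
        rw [EReal.coe_le_coe_iff]
        have := hda_lemD Lc Ls (-ε) α β hLc hLs hLs1 (by linarith) hα hβ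
        linarith
  · rw [if_neg hLs1]
    push_neg at hLs1
    set m := min 1 Lc with hm
    set d := Ls - 1 + m with hd
    have hd0 : 0 < d := by simp only [hd]; linarith
    set rs := (Ls - 1) / d with hrs
    have hrs0 : 0 < rs := div_pos (by linarith) hd0
    have hrs1 : rs < 1 := by
      rw [hrs, div_lt_one hd0]; simp only [hd]; linarith
    have hid : m * rs = (Ls - 1) * (1 - rs) := by
      rw [hrs]; field_simp; ring
    have hDeq : 1 + m * (Ls - 1) / d = 1 + m * rs := by
      rw [hrs, mul_div_assoc]
    rw [hDeq]
    apply le_antisymm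
    · apply iSup_le
      intro r
      rcases le_or_gt r rs with hr | hr
      · -- use set 2
        rcases le_total 1 Lc with hc1 | hc1
        · have hmeq : m = 1 := min_eq_left hc1
          refine le_trans (min_le_right _ _)
            (le_trans (sInf_le ⟨0, 0, le_rfl, le_rfl, ?_, rfl⟩) ?_)
          · have h1 : max ((1:ℝ) - 0) 0 = 1 := by norm_num
            have h2 : max ((0:ℝ) - 1) 0 = 0 := by norm_num
            rw [h1, h2]; linarith
          · rw [EReal.coe_le_coe_iff]
            have h1 : max ((1:ℝ) - 0) 0 = 1 := by norm_num
            rw [h1]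
            have h4 : max (1:ℝ) (1 + r) ≤ 1 + rs :=
              max_le (by linarith) (by linarith)
            rw [hmeq]; linarith
        · have hmeq : m = Lc := min_eq_right hc1
          refine le_trans (min_le_right _ _)
            (le_trans (sInf_le ⟨max r 0, 0, le_max_right _ _, le_rfl, ?_, rfl⟩) ?_)
          · have h1 : max ((1:ℝ) - 0) 0 = 1 := by norm_num
            have h2 : max (max r 0 - 1) 0 = 0 :=
              max_eq_right (by simp only [sub_nonpos]; exact max_le (by linarith) (by linarith))
            rw [h1, h2]; linarith
          · rw [EReal.coe_le_coe_iff]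
            have h1 : max ((1:ℝ) - 0) 0 = 1 := by norm_num
            rw [h1]
            have hα1 : max r 0 ≤ rs := max_le hr hrs0.le
            have h2 : max (1 - max r 0) 0 = 1 - max r 0 :=
              max_eq_left (by linarith)
            have h3 : max (1:ℝ) (max (1 - max r 0) 0 + r) = 1 := by
              rw [h2]
              exact max_eq_left (by have := le_max_left r 0; linarith)
            rw [h3]
            have h5 : Lc * max r 0 ≤ Lc * rs := by nlinarith
            rw [hmeq]; linarith
      · -- use set 1 : α = 0, β = 1 - min r 1
        refine le_trans (min_le_left _ _)
          (le_trans (sInf_le ⟨0, 1 - min r 1, le_rfl, by simp only [sub_nonneg]; exact min_le_right r 1, ?_, rfl⟩) ?_)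
        · have h2 : max ((0:ℝ) - 1) 0 = 0 := by norm_num
          have h1 : max (1 - (1 - min r 1)) 0 = min r 1 := by
            rw [show (1 - (1 - min r 1)) = min r 1 by ring]
            exact max_eq_left (le_min (by linarith) zero_le_one)
          rw [h1, h2]
          simpa using min_le_left r 1
        · rw [EReal.coe_le_coe_iff]
          have h1 : max (1 - (1 - min r 1)) 0 = min r 1 := by
            rw [show (1 - (1 - min r 1)) = min r 1 by ring]
            exact max_eq_left (le_min (by linarith) zero_le_one)
          rw [h1]
          have h2 : rs ≤ min r 1 := le_min (by linarith) (by linarith)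
          nlinarith [mul_nonneg (sub_nonneg.2 h2) (by linarith : (0:ℝ) ≤ Ls - 1)]
    · -- lower bound at r = rs
      refine le_trans (le_min ?_ ?_) (le_iSup (fun r => min _ _) rs)
      · apply le_sInf
        rintro x ⟨α, β, hα, hβ, hcon, rfl⟩
        rw [EReal.coe_le_coe_iff]
        exact hda_lemA Lc Ls m rs α β hLc hLs1 hm0.le hmLc hrs0.le hrs1.le hid hα hβ hcon
      · apply le_sInf
        rintro x ⟨α, β, hα, hβ, hcon, rfl⟩
        rw [EReal.coe_le_coe_iff]
        exact hda_lemB Lc Ls m rs α β hLc hLs1 hm0.le hm1 hmLc hrs1.le hα hβ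
end
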